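/- arXiv:1002.0238 — 11 statements merged into one kernel-verified Lean document; each statement's English description precedes it below -/
import Mathlib

section
/- Let R be a ring and p a positive integer such that every finitely generated left ideal of R can be generated by p elements. Then every finitely generated submodule N of a finitely generated left R-module M generated by g elements can be generated by p·g elements. -/
private theorem levy_key (R : Type*) [Ring R] (p : ℕ)
    (hR : ∀ I : Submodule R R, I.FG →
      ∃ s : Finset R, s.card ≤ p ∧ Submodule.span R (s : Set R) = I)
    (M : Type*) [AddCommGroup M] [Module R M] :
    ∀ t : Finset M, ∀ N : Submodule R M, N.FG → N ≤ Submodule.span R (t : Set M) →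
      ∃ s : Finset M, s.card ≤ p * t.card ∧ Submodule.span R (s : Set M) = N := by
  classical
  intro t
  induction t using Finset.induction_on with
  | empty =>
      intro N _ hle
      refine ⟨∅, by simp, ?_⟩
      simp only [Finset.coe_empty, Submodule.span_empty]
      symm
      rw [eq_bot_iff]
      simpa using hle
  | @insert x t' hx ih =>
      intro N hN hle
      set M' := Submodule.span R (t' : Set M) with hM'
      set π := M'.mkQ with hπ
      -- N maps into the cyclic span of π x
      have hQle : N.map π ≤ Submodule.span R {π x} := by
        refine le_trans (Submodule.map_mono hle) ?_
        rw [Submodule.map_span, Submodule.span_le]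
        rintro y ⟨m, hm, rfl⟩
        rcases Finset.mem_insert.mp (by exact_mod_cast hm) with rfl | hm'
        · exact Submodule.subset_span rfl
        · have : π m = 0 := by
            simpa [hπ, Submodule.Quotient.mk_eq_zero] using
              Submodule.subset_span (Finset.mem_coe.mpr hm')
          rw [this]; exact (Submodule.span R {π x}).zero_mem
      set φ := LinearMap.toSpanSingleton R (M ⧸ M') (π x) with hφ
      have hrange : Submodule.span R {π x} = LinearMap.range φ :=
        LinearMap.span_singleton_eq_range R (M ⧸ M') (π x)
      obtain ⟨w, hw⟩ := hN
      -- lift generators along φ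
      have h1 : ∀ m : M, m ∈ w → ∃ r : R, φ r = π m := by
        intro m hm
        have : π m ∈ LinearMap.range φ := by
          rw [← hrange]
          exact hQle (Submodule.mem_map_of_mem (hw ▸ Submodule.subset_span hm))
        exact this
      choose! r hr using h1
      obtain ⟨sJ, hsJcard, hsJ⟩ := hR (Submodule.span R (↑(w.image r) : Set R))
        ⟨w.image r, rfl⟩
      have hmapJ : Submodule.span R (φ '' (sJ : Set R)) = N.map π := by
        have e1 : Submodule.span R (φ '' (sJ : Set R)) =
            Submodule.map φ (Submodule.span R (sJ : Set R)) := by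
          rw [Submodule.map_span]
        rw [e1, hsJ, Submodule.map_span, Finset.coe_image, Set.image_image]
        have : (fun m => φ (r m)) '' (w : Set M) = π '' (w : Set M) := by
          apply Set.image_congr
          intro m hm
          exact hr m hm
        rw [this, ← Submodule.map_span, hw]
      -- pick elements of N mapping onto φ of the ideal generators
      have h2 : ∀ a : R, a ∈ sJ → ∃ m : M, m ∈ N ∧ π m = φ a := by
        intro a ha
        have : φ a ∈ N.map π := by
          rw [← hmapJ]
          exact Submodule.subset_span ⟨a, ha, rfl⟩
        obtain ⟨m, hm, hm'⟩ := this
        exact ⟨m, hm, hm'⟩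
      choose! n hnN hnπ using h2
      set sN := sJ.image n with hsN
      have hsNsub : ∀ y ∈ sN, y ∈ N := by
        intro y hy
        obtain ⟨a, ha, rfl⟩ := Finset.mem_image.mp hy
        exact hnN a ha
      have hmapsN : N.map π = (Submodule.span R (sN : Set M)).map π := by
        rw [Submodule.map_span, hsN, Finset.coe_image, Set.image_image]
        have : (fun a => π (n a)) '' (sJ : Set R) = φ '' (sJ : Set R) :=
          Set.image_congr fun a ha => hnπ a ha
        rw [this, hmapJ]
      have hNle : N ≤ Submodule.span R (sN : Set M) ⊔ M' := by
        have : N ≤ Submodule.comap π ((Submodule.span R (sN : Set M)).map π) := by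
          intro y hy
          exact hmapsN ▸ Submodule.mem_map_of_mem hy
        refine le_trans this ?_
        rw [Submodule.comap_map_eq, Submodule.ker_mkQ]
      -- decompose generators of N
      have h3 : ∀ m : M, m ∈ w → ∃ c : M, c ∈ Submodule.span R (sN : Set M) ∧
          ∃ d : M, d ∈ M' ∧ m = c + d := by
        intro m hm
        have : m ∈ Submodule.span R (sN : Set M) ⊔ M' :=
          hNle (hw ▸ Submodule.subset_span hm)
        obtain ⟨c, hc, d, hd, hcd⟩ := Submodule.mem_sup.mp this
        exact ⟨c, hc, d, hd, hcd.symm⟩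
      choose! c hc d hd hcd using h3
      set N' := Submodule.span R (↑(w.image d) : Set M) with hN'
      have hN'le : N' ≤ M' := by
        rw [hN', Submodule.span_le]
        rintro y hy
        obtain ⟨m, hm, rfl⟩ := Finset.mem_image.mp (Finset.mem_coe.mp hy)
        exact hd m hm
      obtain ⟨s'', hs''card, hs''⟩ := ih N' ⟨w.image d, rfl⟩ hN'le
      refine ⟨sN ∪ s'', ?_, ?_⟩
      · calc (sN ∪ s'').card ≤ sN.card + s''.card := Finset.card_union_le _ _
          _ ≤ p + p * t'.card := by
              exact Nat.add_le_add (le_trans (Finset.card_image_le) hsJcard) hs''card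
          _ = p * (t'.card + 1) := by ring
          _ = p * (insert x t').card := by rw [Finset.card_insert_of_notMem hx]
      · rw [Finset.coe_union, Submodule.span_union, hs'']
        apply le_antisymm
        · apply sup_le
          · rw [Submodule.span_le]; exact hsNsub
          · rw [hN', Submodule.span_le]
            rintro y hy
            obtain ⟨m, hm, rfl⟩ := Finset.mem_image.mp (Finset.mem_coe.mp hy)
            have hm1 : m ∈ N := hw ▸ Submodule.subset_span hm
            have hspanN : Submodule.span R (sN : Set M) ≤ N := by
              rw [Submodule.span_le]; exact hsNsub
            have hm2 : c m ∈ N := hspanN (hc m hm)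
            have : d m = m - c m := eq_sub_of_add_eq' (hcd m hm).symm
            rw [this]
            exact Submodule.sub_mem N hm1 hm2
        · rw [← hw, Submodule.span_le]
          intro m hm
          rw [hcd m hm]
          exact Submodule.add_mem _
            (Submodule.mem_sup_left (hc m hm))
            (Submodule.mem_sup_right (Submodule.subset_span
              (Finset.mem_coe.mpr (Finset.mem_image_of_mem d hm))))

/-- Levy's lemma: if every finitely generated left ideal of `R` is
`p`-generated, then every finitely generated submodule of a `g`-generated left
`R`-module is `p * g`-generated. -/
theorem stmt_0 (R : Type*) [Ring R] (p : ℕ) (hp : 0 < p)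
    (hR : ∀ I : Submodule R R, I.FG →
      ∃ s : Finset R, s.card ≤ p ∧ Submodule.span R (s : Set R) = I)
    (M : Type*) [AddCommGroup M] [Module R M] (g : ℕ)
    (sM : Finset M) (hcard : sM.card ≤ g) (hspan : Submodule.span R (sM : Set M) = ⊤)
    (N : Submodule R M) (hN : N.FG) :
    ∃ s : Finset M, s.card ≤ p * g ∧ Submodule.span R (s : Set M) = N := by
  obtain ⟨s, hs1, hs2⟩ := levy_key R p hR M sM N hN (by rw [hspan]; exact le_top)
  exact ⟨s, le_trans hs1 (Nat.mul_le_mul_left p hcard), hs2⟩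
end

section
/- Let R be a ring, p a positive integer, and M a right R-module generated by p elements. Then M is flat if and only if for every p-generated left ideal A of R, the natural map M ⊗_R A → M ⊗_R R is injective. -/
open MulOpposite in
/-- A right `R`-module `M` (given as a left `Rᵐᵒᵖ`-module) is `(1,p)`-flat, i.e.
for every left ideal `A` of `R` generated by at most `p` elements, the natural map
`M ⊗_R A → M ⊗_R R = M` is injective.  This is expressed by the standard
element-wise (equational) criterion: whenever `∑ yᵢ aᵢ = 0`, the element
`∑ yᵢ ⊗ aᵢ` is zero in `M ⊗_R A`, where `A` is the left ideal generated by the `aᵢ`. -/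
def OnePFlat (R : Type*) [Ring R] (M : Type*) [AddCommGroup M] [Module Rᵐᵒᵖ M]
    (p : ℕ) : Prop :=
  ∀ (a : Fin p → R) (y : Fin p → M), (∑ i, op (a i) • y i) = 0 →
    ∃ (L : ℕ) (z : Fin L → M) (c : Fin L → Fin p → R),
      (∀ l, ∑ i, c l i * a i = 0) ∧ ∀ i, y i = ∑ l, op (c l i) • z l

/-- A right `R`-module is flat iff `M ⊗_R A → M` is injective for every finitely
generated left ideal `A` (the ideal criterion for flatness), i.e. iff it is
`(1,q)`-flat for every `q`. -/
def RightFlat (R : Type*) [Ring R] (M : Type*) [AddCommGroup M] [Module Rᵐᵒᵖ M] : Prop :=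
  ∀ q : ℕ, OnePFlat R M q

open MulOpposite in
/-- a right `R`-module generated by `p` elements is flat iff it is
`(1,p)`-flat. -/
theorem stmt_3 (R : Type*) [Ring R] (M : Type*) [AddCommGroup M] [Module Rᵐᵒᵖ M]
    (p : ℕ) (hp : 0 < p)
    (hgen : ∃ s : Finset M, s.card ≤ p ∧ Submodule.span Rᵐᵒᵖ (s : Set M) = ⊤) :
    RightFlat R M ↔ OnePFlat R M p := by
  constructor
  · intro h; exact h p
  intro hflat q a y hy
  -- build a generating family `m : Fin p → M`
  obtain ⟨s, hcard, hspan⟩ := hgen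
  set m : Fin p → M := fun j =>
    if h : (j : ℕ) < s.card then (s.equivFin.symm ⟨j, h⟩ : M) else 0 with hm
  have hmspan : Submodule.span Rᵐᵒᵖ (Set.range m) = ⊤ := by
    rw [eq_top_iff, ← hspan]
    apply Submodule.span_le.mpr
    intro x hx
    have hx' : x ∈ s := hx
    have hlt : ((s.equivFin ⟨x, hx'⟩ : Fin s.card) : ℕ) < s.card :=
      (s.equivFin ⟨x, hx'⟩).isLt
    have hlt' : ((s.equivFin ⟨x, hx'⟩ : Fin s.card) : ℕ) < p := lt_of_lt_of_le hlt hcard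
    have : m ⟨(s.equivFin ⟨x, hx'⟩ : Fin s.card), hlt'⟩ = x := by
      simp only [hm]
      rw [dif_pos hlt]
      simp
    exact Submodule.subset_span ⟨_, this⟩
  -- express each yᵢ in terms of the generators
  have hmem : ∀ i, y i ∈ Submodule.span Rᵐᵒᵖ (Set.range m) := fun i => by
    rw [hmspan]; trivial
  choose B hB using fun i => (Submodule.mem_span_range_iff_exists_fun Rᵐᵒᵖ).mp (hmem i)
  set b : Fin p → Fin q → R := fun j i => unop (B i j) with hb
  set d : Fin p → R := fun j => ∑ i, b j i * a i with hd
  -- the induced relation among the generators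
  have hrel : (∑ j, op (d j) • m j) = 0 := by
    calc ∑ j, op (d j) • m j
        = ∑ j, ∑ i, op (a i) • (op (b j i) • m j) := by
          refine Finset.sum_congr rfl fun j _ => ?_
          rw [hd]
          simp only [Finset.op_sum, Finset.sum_smul]
          refine Finset.sum_congr rfl fun i _ => ?_
          rw [op_mul, mul_smul]
      _ = ∑ i, op (a i) • ∑ j, op (b j i) • m j := by
          rw [Finset.sum_comm]
          refine Finset.sum_congr rfl fun i _ => ?_
          rw [Finset.smul_sum]
      _ = ∑ i, op (a i) • y i := by
          refine Finset.sum_congr rfl fun i _ => ?_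
          congr 1
          have := hB i
          simpa [hb] using this
      _ = 0 := hy
  obtain ⟨L, z, c, hc, hz⟩ := hflat d m hrel
  refine ⟨L, z, fun l i => ∑ j, c l j * b j i, fun l => ?_, fun i => ?_⟩
  · calc ∑ i, (∑ j, c l j * b j i) * a i
        = ∑ i, ∑ j, c l j * (b j i * a i) := by
          refine Finset.sum_congr rfl fun i _ => ?_
          rw [Finset.sum_mul]
          exact Finset.sum_congr rfl fun j _ => mul_assoc _ _ _
      _ = ∑ j, c l j * d j := by
          rw [Finset.sum_comm]
          refine Finset.sum_congr rfl fun j _ => ?_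
          rw [hd, Finset.mul_sum]
      _ = 0 := hc l
  · calc y i = ∑ j, op (b j i) • m j := by
          have := hB i
          simp only [hb]
          exact this.symm
      _ = ∑ j, ∑ l, op (c l j * b j i) • z l := by
          refine Finset.sum_congr rfl fun j _ => ?_
          rw [hz j, Finset.smul_sum]
          refine Finset.sum_congr rfl fun l _ => ?_
          rw [op_mul, mul_smul]
      _ = ∑ l, op (∑ j, c l j * b j i) • z l := by
          rw [Finset.sum_comm]
          refine Finset.sum_congr rfl fun l _ => ?_
          simp [Finset.op_sum, Finset.sum_smul]
end

section
/- A ring R is right self (ℵ₀,1)-injective if and only if every finitely generated left ideal A of R satisfies A = l-ann(r-ann(A)), where r-ann denotes the right annihilator in R and l-ann the left annihilator. -/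
/-- The right annihilator of a left ideal `A`, as a right ideal. -/
def rightAnn (R : Type*) [Ring R] (A : Submodule R R) : Submodule Rᵐᵒᵖ R where
  carrier := {x | ∀ a ∈ A, a * x = 0}
  add_mem' := by
    intro x y hx hy a ha
    rw [mul_add, hx a ha, hy a ha, add_zero]
  zero_mem' := by intro a _; rw [mul_zero]
  smul_mem' := by
    intro c x hx a ha
    rw [MulOpposite.smul_eq_mul_unop, ← mul_assoc, hx a ha, zero_mul]

/-- The left annihilator of a right ideal `B`, as a left ideal of `R`. -/
def leftAnn (R : Type*) [Ring R] (B : Submodule Rᵐᵒᵖ R) : Submodule R R where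
  carrier := {x | ∀ b ∈ B, x * b = 0}
  add_mem' := by
    intro x y hx hy b hb
    rw [add_mul, hx b hb, hy b hb, add_zero]
  zero_mem' := by intro b _; rw [zero_mul]
  smul_mem' := by
    intro c x hx b hb
    rw [smul_eq_mul, mul_assoc, hx b hb, mul_zero]

/-- `R` is right self `(ℵ₀,1)`-injective: for every `n ≥ 1` and every cyclic
submodule `K` of the free right `R`-module `Rⁿ`, every right `R`-module
homomorphism `K → R` extends to `Rⁿ`.  Right modules are left `Rᵐᵒᵖ`-modules. -/
def RightSelfAleph0OneInjective (R : Type*) [Ring R] : Prop :=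
  ∀ n : ℕ, 0 < n → ∀ x : Fin n → R,
    ∀ f : (Submodule.span Rᵐᵒᵖ {x} : Submodule Rᵐᵒᵖ (Fin n → R)) →ₗ[Rᵐᵒᵖ] R,
      ∃ g : (Fin n → R) →ₗ[Rᵐᵒᵖ] R,
        ∀ k : (Submodule.span Rᵐᵒᵖ {x} : Submodule Rᵐᵒᵖ (Fin n → R)), g k.1 = f k

section aux
variable {R : Type*} [Ring R]

lemma mem_rightAnn_span_range {n : ℕ} {v : Fin n → R} {r : R} :
    r ∈ rightAnn R (Submodule.span R (Set.range v)) ↔ ∀ i, v i * r = 0 := by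
  constructor
  · intro h i
    exact h (v i) (Submodule.subset_span ⟨i, rfl⟩)
  · intro h a ha
    induction ha using Submodule.span_induction with
    | mem a hm => obtain ⟨i, rfl⟩ := hm; exact h i
    | zero => rw [zero_mul]
    | add a b _ _ ha hb => rw [add_mul, ha, hb, add_zero]
    | smul s a _ ha => rw [smul_eq_mul, mul_assoc, ha, mul_zero]

end aux

/-- `R` is right self `(ℵ₀,1)`-injective iff every finitely generated
left ideal `A` of `R` satisfies `A = l-ann(r-ann(A))`. -/
theorem stmt_4 (R : Type*) [Ring R] :
    RightSelfAleph0OneInjective R ↔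
      ∀ A : Submodule R R, A.FG → leftAnn R (rightAnn R A) = A := by
  constructor
  · -- injectivity → double annihilator condition
    intro hinj A hA
    refine le_antisymm ?_ (fun a ha b hb => hb a ha)
    obtain ⟨n, x, hx⟩ := Submodule.fg_iff_exists_fin_generating_family.mp hA
    intro b hb
    rcases Nat.eq_zero_or_pos n with hn | hn
    · -- no generators: A = ⊥ and b * 1 = 0
      subst hn
      have h1 : (1 : R) ∈ rightAnn R A := by
        intro a ha
        rw [← hx] at ha
        rw [Set.range_eq_empty x, Submodule.span_empty, Submodule.mem_bot] at ha
        rw [ha, zero_mul]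
      have := hb 1 h1
      rw [mul_one] at this
      rw [this]; exact A.zero_mem
    · -- use injectivity with the cyclic submodule generated by x
      set T : Rᵐᵒᵖ →ₗ[Rᵐᵒᵖ] (Fin n → R) := LinearMap.toSpanSingleton Rᵐᵒᵖ (Fin n → R) x
      set B : Rᵐᵒᵖ →ₗ[Rᵐᵒᵖ] R := LinearMap.toSpanSingleton Rᵐᵒᵖ R b
      have hker : LinearMap.ker T ≤ LinearMap.ker B := by
        intro r hr
        have hTr : r • x = 0 := hr
        have hri : ∀ i, x i * r.unop = 0 := by
          intro i
          have := congrFun hTr i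
          simpa [MulOpposite.smul_eq_mul_unop] using this
        have hrann : r.unop ∈ rightAnn R A := by
          rw [← hx]; exact mem_rightAnn_span_range.mpr hri
        have : b * r.unop = 0 := hb r.unop hrann
        simpa [B, LinearMap.mem_ker, LinearMap.toSpanSingleton_apply,
          MulOpposite.smul_eq_mul_unop] using this
      have hrange : (Submodule.span Rᵐᵒᵖ {x} : Submodule Rᵐᵒᵖ (Fin n → R)) = LinearMap.range T :=
        LinearMap.span_singleton_eq_range Rᵐᵒᵖ (Fin n → R) x
      set f : (Submodule.span Rᵐᵒᵖ {x} : Submodule Rᵐᵒᵖ (Fin n → R)) →ₗ[Rᵐᵒᵖ] R :=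
        ((Submodule.liftQ (LinearMap.ker T) B hker).comp
          T.quotKerEquivRange.symm.toLinearMap).comp
          (LinearEquiv.ofEq _ _ hrange).toLinearMap with hfdef
      obtain ⟨g, hg⟩ := hinj n hn x f
      have hxmem : x ∈ (Submodule.span Rᵐᵒᵖ {x} : Submodule Rᵐᵒᵖ (Fin n → R)) :=
        Submodule.mem_span_singleton_self x
      have hT1 : T 1 = x := by
        simp [T, LinearMap.toSpanSingleton_apply]
      have hfx : f ⟨x, hxmem⟩ = b := by
        have hmem : x ∈ LinearMap.range T := hrange ▸ hxmem
        have h1 : (LinearEquiv.ofEq _ _ hrange) ⟨x, hxmem⟩ = ⟨x, hmem⟩ := rfl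
        have hmem' : T 1 ∈ LinearMap.range T := ⟨1, rfl⟩
        have h2 : T.quotKerEquivRange.symm ⟨x, hmem⟩ =
            Submodule.Quotient.mk (1 : Rᵐᵒᵖ) := by
          have := LinearMap.quotKerEquivRange_symm_apply_image T (1 : Rᵐᵒᵖ) hmem'
          have hcast : (⟨x, hmem⟩ : LinearMap.range T) = ⟨T 1, hmem'⟩ :=
            Subtype.ext hT1.symm
          rw [hcast, this]; rfl
        rw [hfdef]
        simp only [LinearMap.comp_apply, LinearEquiv.coe_toLinearMap, h1, h2]
        rw [Submodule.liftQ_apply]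
        simp [B, LinearMap.toSpanSingleton_apply]
      have hgx : g x = b := by
        have := hg ⟨x, hxmem⟩
        rw [hfx] at this
        exact this
      -- decompose x into standard basis vectors to see g x ∈ A
      have hxdecomp : x = ∑ i, (MulOpposite.op (x i)) • Pi.single i (1 : R) := by
        funext j
        rw [Finset.sum_apply]
        have : ∀ i, ((MulOpposite.op (x i)) • (Pi.single i (1 : R) : Fin n → R)) j
            = (Pi.single i (x i) : Fin n → R) j := by
          intro i
          by_cases hij : i = j
          · subst hij; simp [MulOpposite.smul_eq_mul_unop]
          · simp [Pi.single_eq_of_ne (Ne.symm hij), Pi.single_eq_of_ne (Ne.symm hij),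
              MulOpposite.smul_eq_mul_unop, hij]
        rw [Finset.sum_congr rfl (fun i _ => this i)]
        classical
        simp [Pi.single_apply, Finset.sum_ite_eq]
      have : g x = ∑ i, (g (Pi.single i 1)) * x i := by
        conv_lhs => rw [hxdecomp]
        rw [map_sum]
        refine Finset.sum_congr rfl (fun i _ => ?_)
        rw [g.map_smul, MulOpposite.smul_eq_mul_unop, MulOpposite.unop_op]
      rw [← hgx, this, ← hx]
      exact Submodule.sum_mem _ fun i _ =>
        Submodule.smul_mem _ _ (Submodule.subset_span ⟨i, rfl⟩)
  · -- double annihilator condition → injectivity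
    intro h n hn x f
    set A : Submodule R R := Submodule.span R (Set.range x) with hAdef
    have hAfg : A.FG := Submodule.fg_span (Set.finite_range x)
    have hxmem : x ∈ (Submodule.span Rᵐᵒᵖ {x} : Submodule Rᵐᵒᵖ (Fin n → R)) :=
      Submodule.mem_span_singleton_self x
    set b : R := f ⟨x, hxmem⟩ with hbdef
    have hbA : b ∈ A := by
      rw [← h A hAfg]
      intro r hr
      have hri : ∀ i, x i * r = 0 := by
        intro i
        exact hr (x i) (Submodule.subset_span ⟨i, rfl⟩)
      have hzero : (MulOpposite.op r) • x = 0 := by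
        funext i
        simpa [MulOpposite.smul_eq_mul_unop] using hri i
      have : (MulOpposite.op r) • (⟨x, hxmem⟩ :
          (Submodule.span Rᵐᵒᵖ {x} : Submodule Rᵐᵒᵖ (Fin n → R))) = 0 :=
        Subtype.ext hzero
      calc b * r = (MulOpposite.op r) • b := by
            rw [MulOpposite.smul_eq_mul_unop, MulOpposite.unop_op]
        _ = f ((MulOpposite.op r) • ⟨x, hxmem⟩) := (f.map_smul _ _).symm
        _ = 0 := by rw [this, f.map_zero]
    obtain ⟨c, hc⟩ := (Submodule.mem_span_range_iff_exists_fun R).mp hbA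
    refine ⟨{ toFun := fun y => ∑ i, c i * y i
              map_add' := by
                intro y z
                simp [mul_add, Finset.sum_add_distrib]
              map_smul' := by
                intro r y
                simp [MulOpposite.smul_eq_mul_unop, Finset.sum_mul, mul_assoc] }, ?_⟩
    intro k
    obtain ⟨a, ha⟩ := Submodule.mem_span_singleton.mp k.2
    have hk : k = a • ⟨x, hxmem⟩ := Subtype.ext ha.symm
    have hgx : ∑ i, c i * x i = b := by simpa [smul_eq_mul] using hc
    rw [hk]
    simp only [LinearMap.coe_mk, AddHom.coe_mk, SetLike.val_smul, LinearMap.map_smul]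
    rw [hgx]
end

section
/- A ring R is right self (ℵ₀,1)-injective if and only if every finitely presented cyclic left R-module is torsionless. -/
/-- A module is torsionless iff the natural map to its double dual is injective,
i.e. every nonzero element is separated from zero by a linear form. -/
def Torsionless (R : Type*) [Ring R] (M : Type*) [AddCommGroup M] [Module R M] : Prop :=
  ∀ m : M, (∀ f : M →ₗ[R] R, f m = 0) → m = 0

/-- `R` is right self `(ℵ₀,1)`-injective iff every finitely presented
cyclic left `R`-module (i.e. `R/A` with `A` a finitely generated left ideal)
is torsionless. -/
theorem stmt_5 (R : Type*) [Ring R] :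
    RightSelfAleph0OneInjective R ↔
      ∀ A : Submodule R R, A.FG → Torsionless R (R ⧸ A) := by
  constructor
  · intro H A hA m hm
    obtain ⟨n, y, hy⟩ := Submodule.fg_iff_exists_fin_generating_family.mp hA
    obtain ⟨r, rfl⟩ := Submodule.mkQ_surjective A m
    set x : Fin (n + 1) → R := Fin.cons 0 y with hxdef
    have hxspan : Submodule.span R (Set.range x) = A := by
      rw [hxdef, Fin.range_cons, Submodule.span_insert_zero, hy]
    have hyp : ∀ b : R, (∀ i, x i * b = 0) → r * b = 0 := by
      intro b hb
      have hle : A ≤ LinearMap.ker (LinearMap.toSpanSingleton R R b) := by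
        rw [← hxspan, Submodule.span_le]
        rintro a ⟨i, rfl⟩
        simpa [LinearMap.mem_ker, LinearMap.toSpanSingleton_apply, smul_eq_mul] using hb i
      have := hm (A.liftQ (LinearMap.toSpanSingleton R R b) hle)
      simpa [Submodule.liftQ_apply, LinearMap.toSpanSingleton_apply, smul_eq_mul] using this
    have key : ∀ c c' : Rᵐᵒᵖ, c • x = c' • x → r * c.unop = r * c'.unop := by
      intro c c' h
      have h2 : ∀ i, x i * (c.unop - c'.unop) = 0 := by
        intro i
        have := congrFun h i
        simp only [Pi.smul_apply, MulOpposite.smul_eq_mul_unop] at this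
        rw [mul_sub, this, sub_self]
      have h3 := hyp _ h2
      rwa [mul_sub, sub_eq_zero] at h3
    have hmem : ∀ k : (Submodule.span Rᵐᵒᵖ {x} : Submodule Rᵐᵒᵖ (Fin (n + 1) → R)),
        ∃ c : Rᵐᵒᵖ, c • x = (k : Fin (n + 1) → R) :=
      fun k => Submodule.mem_span_singleton.mp k.2
    have hspec : ∀ k : (Submodule.span Rᵐᵒᵖ {x} : Submodule Rᵐᵒᵖ (Fin (n + 1) → R)),
        Classical.choose (hmem k) • x = (k : Fin (n + 1) → R) :=
      fun k => Classical.choose_spec (hmem k)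
    let f : (Submodule.span Rᵐᵒᵖ {x} : Submodule Rᵐᵒᵖ (Fin (n + 1) → R)) →ₗ[Rᵐᵒᵖ] R :=
      { toFun := fun k => r * (Classical.choose (hmem k)).unop
        map_add' := by
          intro k k'
          have h : Classical.choose (hmem (k + k')) • x
              = (Classical.choose (hmem k) + Classical.choose (hmem k')) • x := by
            rw [add_smul, hspec, hspec, hspec]; rfl
          show r * (Classical.choose (hmem (k + k'))).unop
              = r * (Classical.choose (hmem k)).unop + r * (Classical.choose (hmem k')).unop
          rw [key _ _ h, MulOpposite.unop_add, mul_add]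
        map_smul' := by
          intro c k
          have h : Classical.choose (hmem (c • k)) • x
              = (c * Classical.choose (hmem k)) • x := by
            rw [mul_smul, hspec, hspec]; rfl
          show r * (Classical.choose (hmem (c • k))).unop
              = c • (r * (Classical.choose (hmem k)).unop)
          rw [key _ _ h, MulOpposite.unop_mul, ← mul_assoc,
            MulOpposite.smul_eq_mul_unop] }
    obtain ⟨g, hg⟩ := H (n + 1) (Nat.succ_pos n) x f
    have hxK : x ∈ (Submodule.span Rᵐᵒᵖ {x} : Submodule Rᵐᵒᵖ (Fin (n + 1) → R)) :=
      Submodule.mem_span_singleton_self x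
    have hr : r = g x := by
      have h1 : Classical.choose (hmem ⟨x, hxK⟩) • x = (1 : Rᵐᵒᵖ) • x := by
        rw [hspec ⟨x, hxK⟩, one_smul]
      have h2 := key _ _ h1
      have h3 := hg ⟨x, hxK⟩
      simp only [f, LinearMap.coe_mk, AddHom.coe_mk] at h3
      rw [h3, h2, MulOpposite.unop_one, mul_one]
    have hrA : r ∈ A := by
      rw [← hxspan]
      have hsum : x = ∑ i, Pi.single i (x i) := (Finset.univ_sum_single x).symm
      have hsingle : ∀ i : Fin (n + 1),
          Pi.single i (x i) = MulOpposite.op (x i) • (Pi.single i (1 : R) : Fin (n + 1) → R) := by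
        intro i
        funext j
        by_cases hji : j = i
        · subst hji; simp [MulOpposite.smul_eq_mul_unop]
        · simp [Pi.single_eq_of_ne hji, MulOpposite.smul_eq_mul_unop]
      have : g x = ∑ i, g (Pi.single i (1 : R)) • x i := by
        conv_lhs => rw [hsum]
        rw [map_sum]
        refine Finset.sum_congr rfl fun i _ => ?_
        rw [hsingle i, g.map_smul, MulOpposite.smul_eq_mul_unop, MulOpposite.unop_op,
          smul_eq_mul]
      rw [hr, this]
      exact Submodule.sum_mem _ fun i _ =>
        Submodule.smul_mem _ _ (Submodule.subset_span ⟨i, rfl⟩)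
    exact (Submodule.Quotient.mk_eq_zero A).mpr hrA
  · intro H n hn x f
    have hxK : x ∈ (Submodule.span Rᵐᵒᵖ {x} : Submodule Rᵐᵒᵖ (Fin n → R)) :=
      Submodule.mem_span_singleton_self x
    set r := f ⟨x, hxK⟩ with hrdef
    set A := Submodule.span R (Set.range x) with hAdef
    have hA : A.FG := Submodule.fg_span (Set.finite_range x)
    have hr0 : ∀ h : (R ⧸ A) →ₗ[R] R, h (A.mkQ r) = 0 := by
      intro h
      set b := h (A.mkQ 1) with hbdef
      have happ : ∀ s : R, h (A.mkQ s) = s * b := by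
        intro s
        have : A.mkQ s = s • A.mkQ 1 := by rw [← (A.mkQ).map_smul, smul_eq_mul, mul_one]
        rw [this, h.map_smul, smul_eq_mul, hbdef]
      have hb : ∀ i, x i * b = 0 := by
        intro i
        rw [← happ]
        have : A.mkQ (x i) = 0 :=
          (Submodule.Quotient.mk_eq_zero A).mpr (Submodule.subset_span ⟨i, rfl⟩)
        rw [this, h.map_zero]
      have hxb : (MulOpposite.op b) • (⟨x, hxK⟩ :
          (Submodule.span Rᵐᵒᵖ {x} : Submodule Rᵐᵒᵖ (Fin n → R))) = 0 := by
        apply Subtype.ext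
        show (MulOpposite.op b) • x = 0
        funext i
        simp only [Pi.smul_apply, MulOpposite.smul_eq_mul_unop, MulOpposite.unop_op,
          Pi.zero_apply]
        exact hb i
      have hrb : r * b = 0 := by
        have := f.map_smul (MulOpposite.op b) ⟨x, hxK⟩
        rw [hxb, f.map_zero] at this
        have h2 : (0 : R) = r * b := by
          rw [this, MulOpposite.smul_eq_mul_unop, MulOpposite.unop_op, hrdef]
        exact h2.symm
      rw [happ, hrb]
    have hrA : r ∈ A := by
      have := H A hA (A.mkQ r) hr0
      exact (Submodule.Quotient.mk_eq_zero A).mp this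
    obtain ⟨c, hc⟩ := (Submodule.mem_span_range_iff_exists_fun R).mp hrA
    refine ⟨{ toFun := fun v => ∑ i, c i * v i
              map_add' := by
                intro v w
                simp [mul_add, Finset.sum_add_distrib]
              map_smul' := by
                intro t v
                simp only [Pi.smul_apply, MulOpposite.smul_eq_mul_unop, RingHom.id_apply]
                rw [Finset.sum_mul]
                exact Finset.sum_congr rfl fun i _ => (mul_assoc _ _ _).symm }, ?_⟩
    intro k
    obtain ⟨t, ht⟩ := Submodule.mem_span_singleton.mp k.2
    have hk : k = t • (⟨x, hxK⟩ :
        (Submodule.span Rᵐᵒᵖ {x} : Submodule Rᵐᵒᵖ (Fin n → R))) :=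
      Subtype.ext (by rw [← ht]; rfl)
    have hk1 : (k : Fin n → R) = t • x := ht.symm
    rw [hk1, hk, f.map_smul]
    simp only [LinearMap.coe_mk, AddHom.coe_mk, Pi.smul_apply,
      MulOpposite.smul_eq_mul_unop, ← hrdef]
    rw [Finset.sum_congr rfl fun i _ => (mul_assoc (c i) (x i) t.unop).symm, ← Finset.sum_mul]
    have hc' : ∑ i, c i * x i = r := by simpa [smul_eq_mul] using hc
    rw [hc']
end

section
/- A ring R is left (ℵ₀,1)-coherent if and only if the left annihilator of every finitely generated right ideal of R is a finitely generated left ideal. -/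
lemma mem_leftAnn_iff {R : Type*} [Ring R] {B : Submodule Rᵐᵒᵖ R} {r : R} :
    r ∈ leftAnn R B ↔ ∀ b ∈ B, r * b = 0 := Iff.rfl

/-- The kernel of `r ↦ r • x` is the left annihilator of the right ideal generated by the
coordinates of `x`. -/
lemma ker_toSpanSingleton_eq_leftAnn {R : Type*} [Ring R] {n : ℕ} (x : Fin n → R) :
    LinearMap.ker (LinearMap.toSpanSingleton R (Fin n → R) x)
      = leftAnn R (Submodule.span Rᵐᵒᵖ (Set.range x)) := by
  ext r
  rw [LinearMap.mem_ker, LinearMap.toSpanSingleton_apply, mem_leftAnn_iff]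
  constructor
  · intro h b hb
    induction hb using Submodule.span_induction with
    | mem b hb =>
      obtain ⟨i, rfl⟩ := hb
      have := congrFun h i
      simpa using this
    | zero => simp
    | add b c _ _ hb hc => rw [mul_add, hb, hc, add_zero]
    | smul c b _ hb =>
      rw [MulOpposite.smul_eq_mul_unop, ← mul_assoc, hb, zero_mul]
  · intro h
    funext i
    simpa using h (x i) (Submodule.subset_span ⟨i, rfl⟩)

/-- a ring `R` is left `(ℵ₀,1)`-coherent (every cyclic submodule of
a finite free left module `Rⁿ` is finitely presented) iff the left annihilator of
every finitely generated right ideal of `R` is a finitely generated left ideal. -/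
theorem stmt_8 (R : Type*) [Ring R] :
    (∀ n : ℕ, 0 < n → ∀ x : Fin n → R,
        Module.FinitePresentation R (Submodule.span R {x} : Submodule R (Fin n → R))) ↔
      ∀ B : Submodule Rᵐᵒᵖ R, B.FG → (leftAnn R B).FG := by
  have key : ∀ n : ℕ, ∀ x : Fin n → R,
      ∃ l : R →ₗ[R] (Submodule.span R {x} : Submodule R (Fin n → R)),
        Function.Surjective l ∧
          LinearMap.ker l = leftAnn R (Submodule.span Rᵐᵒᵖ (Set.range x)) := by
    intro n x
    have hr : (Submodule.span R {x} : Submodule R (Fin n → R))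
        = LinearMap.range (LinearMap.toSpanSingleton R (Fin n → R) x) :=
      LinearMap.span_singleton_eq_range R _ x
    refine ⟨(LinearMap.toSpanSingleton R (Fin n → R) x).codRestrict _
        (fun r => ?_), ?_, ?_⟩
    · rw [hr]; exact LinearMap.mem_range_self _ r
    · rintro ⟨y, hy⟩
      rw [hr] at hy
      obtain ⟨r, hr'⟩ := hy
      exact ⟨r, Subtype.ext hr'⟩
    · rw [LinearMap.ker_codRestrict]
      exact ker_toSpanSingleton_eq_leftAnn x
  constructor
  · intro H B hB
    obtain ⟨S, rfl⟩ := hB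
    classical
    set n := S.card with hn
    let e := S.equivFin
    let x : Fin (n + 1) → R := Fin.cons 0 (fun i => (e.symm i : R))
    have hrange : Set.range x = insert 0 (S : Set R) := by
      rw [Fin.range_cons]
      congr 1
      ext a
      constructor
      · rintro ⟨i, rfl⟩; exact (e.symm i).2
      · intro ha; exact ⟨e ⟨a, ha⟩, by simp⟩
    have hspan : Submodule.span Rᵐᵒᵖ (Set.range x) = Submodule.span Rᵐᵒᵖ (S : Set R) := by
      rw [hrange, Submodule.span_insert_zero]
    obtain ⟨l, hl, hker⟩ := key (n + 1) x
    rw [← hspan, ← hker]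
    have := H (n + 1) (Nat.succ_pos n) x
    exact Module.FinitePresentation.fg_ker l hl
  · intro H n _ x
    obtain ⟨l, hl, hker⟩ := key n x
    refine Module.finitePresentation_of_surjective l hl ?_
    rw [hker]
    exact H _ (Submodule.fg_span (Set.finite_range x))
end

section
/- Let R be a quasi-Frobenius ring. Then a right R-module M is flat if and only if for every principal left ideal Ra, the natural map M ⊗_R Ra → M is injective. -/
namespace Stmt9Aux

open MulOpposite

universe u v

section Helper
variable {A : Type u} [Ring A] [Module.Injective A A]
variable {V W : Type u} [AddCommGroup V] [Module A V] [AddCommGroup W] [Module A W]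

/-- Extension of functionals along a parametrized submodule, from self-injectivity. -/
lemma extend_functional (π : W →ₗ[A] V) (φ : W →ₗ[A] A)
    (hker : ∀ w, π w = 0 → φ w = 0) :
    ∃ H : V →ₗ[A] A, ∀ w, H (π w) = φ w := by
  set K := LinearMap.ker π with hK
  have hle : K ≤ LinearMap.ker φ := fun w hw => hker w hw
  set ι : (W ⧸ K) →ₗ[A] V := K.liftQ π (le_refl _) with hι
  have hinj : Function.Injective ι := by
    rw [← LinearMap.ker_eq_bot]
    exact Submodule.ker_liftQ_eq_bot _ _ _ (le_refl _)
  obtain ⟨H, hH⟩ := Module.Injective.out ι hinj (K.liftQ φ hle)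
  refine ⟨H, fun w => ?_⟩
  have h1 : ι (Submodule.Quotient.mk w) = π w := Submodule.liftQ_apply _ _ _
  have h2 : (K.liftQ φ hle) (Submodule.Quotient.mk w) = φ w := Submodule.liftQ_apply _ _ _
  rw [← h1, hH, h2]

end Helper

section RingLemmas
variable {R : Type u} [Ring R] [Module.Injective Rᵐᵒᵖ Rᵐᵒᵖ]

/-- If the right annihilator of `a` is contained in that of `x`, then `x ∈ Ra`. -/
lemma exists_left_factor {a x : R} (h : ∀ c, a * c = 0 → x * c = 0) :
    ∃ u : R, x = u * a := by
  obtain ⟨H, hH⟩ := extend_functional (A := Rᵐᵒᵖ)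
      (LinearMap.toSpanSingleton Rᵐᵒᵖ Rᵐᵒᵖ (op a))
      (LinearMap.toSpanSingleton Rᵐᵒᵖ Rᵐᵒᵖ (op x)) (fun w hw => by
        simp only [LinearMap.toSpanSingleton_apply, smul_eq_mul] at hw ⊢
        have h1 : a * (unop w) = 0 := by
          have := congrArg unop hw; simpa using this
        have h2 := h _ h1
        calc w * op x = op (x * unop w) := by simp
          _ = 0 := by rw [h2, op_zero])
  refine ⟨unop (H 1), ?_⟩
  have h1 : H (op a) = op x := by
    have := hH 1; simpa using this
  have h2 : H (op a) = op a * H 1 := by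
    conv_lhs => rw [show (op a : Rᵐᵒᵖ) = op a • (1 : Rᵐᵒᵖ) by simp, map_smul]
    simp [smul_eq_mul]
  have h3 : op x = op ((unop (H 1)) * a) := by
    rw [← h1, h2]; simp
  simpa using (congrArg unop h3)

/-- Double annihilator property for finitely generated left ideals. -/
lemma mem_of_rann_le {s : ℕ} (d : Fin s → R) (x : R)
    (h : ∀ c, (∀ j, d j * c = 0) → x * c = 0) :
    ∃ u : Fin s → R, x = ∑ j, u j * d j := by
  induction s generalizing x with
  | zero =>
    refine ⟨fun j => j.elim0, ?_⟩
    have : x * 1 = 0 := h 1 (fun j => j.elim0)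
    simpa using this
  | succ s IH =>
    set I : Submodule Rᵐᵒᵖ Rᵐᵒᵖ :=
      LinearMap.ker (LinearMap.toSpanSingleton Rᵐᵒᵖ Rᵐᵒᵖ (op (d 0))) with hIdef
    set J : Submodule Rᵐᵒᵖ Rᵐᵒᵖ :=
      ⨅ j : Fin s, LinearMap.ker (LinearMap.toSpanSingleton Rᵐᵒᵖ Rᵐᵒᵖ (op (d j.succ))) with hJdef
    have memI : ∀ z : Rᵐᵒᵖ, z ∈ I ↔ d 0 * unop z = 0 := by
      intro z
      simp only [hIdef, LinearMap.mem_ker, LinearMap.toSpanSingleton_apply, smul_eq_mul]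
      constructor
      · intro hz
        have := congrArg unop hz; simpa using this
      · intro hz
        have h4 : z * op (d 0) = op (d 0 * unop z) := by simp
        rw [h4, hz, op_zero]
    have memJ : ∀ z : Rᵐᵒᵖ, z ∈ J ↔ ∀ j : Fin s, d j.succ * unop z = 0 := by
      intro z
      simp only [hJdef, Submodule.mem_iInf, LinearMap.mem_ker,
        LinearMap.toSpanSingleton_apply, smul_eq_mul]
      constructor
      · intro hz j
        have := congrArg unop (hz j); simpa using this
      · intro hz j
        have h4 : z * op (d j.succ) = op (d j.succ * unop z) := by simp
        rw [h4, hz j, op_zero]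
    obtain ⟨H, hH⟩ := extend_functional (A := Rᵐᵒᵖ)
      ((I.subtype).coprod (J.subtype))
      ((LinearMap.toSpanSingleton Rᵐᵒᵖ Rᵐᵒᵖ (op x)).comp
        ((I.subtype).comp (LinearMap.fst Rᵐᵒᵖ I J)))
      (fun w hw => by
        obtain ⟨i, j⟩ := w
        simp only [LinearMap.coprod_apply, Submodule.coe_subtype] at hw
        simp only [LinearMap.comp_apply, LinearMap.fst_apply, Submodule.coe_subtype,
          LinearMap.toSpanSingleton_apply, smul_eq_mul]
        have hij : (i : Rᵐᵒᵖ) = -(j : Rᵐᵒᵖ) := eq_neg_of_add_eq_zero_left hw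
        have hiJ : (i : Rᵐᵒᵖ) ∈ J := by
          rw [hij]; exact neg_mem j.2
        have hc : ∀ jj : Fin (s+1), d jj * unop (i : Rᵐᵒᵖ) = 0 := by
          intro jj
          refine Fin.cases ?_ ?_ jj
          · exact (memI _).1 i.2
          · intro jjj
            exact (memJ _).1 hiJ jjj
        have h5 := h _ hc
        calc (i : Rᵐᵒᵖ) * op x = op (x * unop (i : Rᵐᵒᵖ)) := by simp
          _ = 0 := by rw [h5, op_zero])
    set α : Rᵐᵒᵖ := H 1 with hα
    have hHz : ∀ z : Rᵐᵒᵖ, H z = z * α := by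
      intro z
      conv_lhs => rw [show z = z • (1 : Rᵐᵒᵖ) by simp, map_smul]
      simp [smul_eq_mul, hα]
    set u : R := unop α with hu
    have hxu : ∀ c : R, d 0 * c = 0 → (x - u) * c = 0 := by
      intro c hc
      have hiI : (op c : Rᵐᵒᵖ) ∈ I := (memI _).2 (by simpa using hc)
      have := hH (⟨⟨op c, hiI⟩, 0⟩ : I × J)
      simp only [LinearMap.coprod_apply, Submodule.coe_subtype, LinearMap.comp_apply,
        LinearMap.fst_apply, LinearMap.toSpanSingleton_apply, smul_eq_mul,
        Submodule.coe_zero, add_zero] at this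
      have h6 : op c * α = op c * op x := by rw [← hHz]; exact this
      have h7 : u * c = x * c := by
        have := congrArg unop h6; simpa [hu] using this
      rw [sub_mul, h7, sub_self]
    have hukill : ∀ c : R, (∀ j : Fin s, d j.succ * c = 0) → u * c = 0 := by
      intro c hc
      have hjJ : (op c : Rᵐᵒᵖ) ∈ J := (memJ _).2 (by simpa using hc)
      have := hH (⟨0, ⟨op c, hjJ⟩⟩ : I × J)
      simp only [LinearMap.coprod_apply, Submodule.coe_subtype, LinearMap.comp_apply,
        LinearMap.fst_apply, LinearMap.toSpanSingleton_apply, smul_eq_mul,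
        Submodule.coe_zero, zero_add, zero_mul] at this
      have h6 : op c * α = 0 := by rw [← hHz]; exact this
      have := congrArg unop h6; simpa [hu] using this
    obtain ⟨w, hw⟩ := exists_left_factor hxu
    obtain ⟨u', hu'⟩ := IH (fun j => d j.succ) u hukill
    refine ⟨Fin.cons w u', ?_⟩
    rw [Fin.sum_univ_succ]
    simp only [Fin.cons_zero, Fin.cons_succ]
    have hx : x = (x - u) + u := by abel
    rw [hx, hw, hu']

/-- A proper left ideal of a quasi-Frobenius ring has nonzero right annihilator. -/
lemma rann_ne_zero [IsArtinian Rᵐᵒᵖ Rᵐᵒᵖ] {D : Submodule R R} (hD : D ≠ ⊤) :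
    ∃ g : R, g ≠ 0 ∧ ∀ r ∈ D, r * g = 0 := by
  by_contra hcon
  push_neg at hcon
  have hzero : ∀ g : R, (∀ r ∈ D, r * g = 0) → g = 0 := by
    intro g hg
    by_contra hgne
    obtain ⟨r, hr, hne⟩ := hcon g hgne
    exact hne (hg r hr)
  let kerOf : R → Submodule Rᵐᵒᵖ Rᵐᵒᵖ := fun r =>
    LinearMap.ker (LinearMap.toSpanSingleton Rᵐᵒᵖ Rᵐᵒᵖ (op r))
  have memker : ∀ (r : R) (z : Rᵐᵒᵖ), z ∈ kerOf r ↔ r * unop z = 0 := by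
    intro r z
    simp only [kerOf, LinearMap.mem_ker, LinearMap.toSpanSingleton_apply, smul_eq_mul]
    constructor
    · intro hz; have := congrArg unop hz; simpa using this
    · intro hz
      have h4 : z * op r = op (r * unop z) := by simp
      rw [h4, hz, op_zero]
  let S : Set (Submodule Rᵐᵒᵖ Rᵐᵒᵖ) :=
    {K | ∃ (s : ℕ) (dd : Fin s → R), (∀ j, dd j ∈ D) ∧ K = ⨅ j, kerOf (dd j)}
  have hSne : S.Nonempty := ⟨⊤, 0, fun i => i.elim0, fun j => j.elim0, (iInf_of_empty _).symm⟩
  obtain ⟨K₀, hK₀S, hK₀min⟩ :=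
    (IsWellFounded.wf (α := Submodule Rᵐᵒᵖ Rᵐᵒᵖ) (r := (· < ·))).has_min S hSne
  obtain ⟨s, dd, hddD, rfl⟩ := hK₀S
  have hsub : ∀ r ∈ D, (⨅ j, kerOf (dd j)) ≤ kerOf r := by
    intro r hr
    by_contra hle
    obtain ⟨z, hz1, hz2⟩ := SetLike.not_le_iff_exists.mp hle
    have hK' : ((⨅ j, kerOf (dd j)) ⊓ kerOf r) ∈ S := by
      refine ⟨s + 1, Fin.cons r dd, ?_, ?_⟩
      · intro j
        refine Fin.cases ?_ ?_ j
        · exact hr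
        · exact hddD
      · ext zz
        simp only [Submodule.mem_inf, Submodule.mem_iInf]
        constructor
        · rintro ⟨h1, h2⟩ j
          refine Fin.cases ?_ ?_ j
          · simpa [Fin.cons_zero] using h2
          · intro jj; simpa [Fin.cons_succ] using h1 jj
        · intro hall
          exact ⟨fun jj => by simpa [Fin.cons_succ] using hall jj.succ,
            by simpa [Fin.cons_zero] using hall 0⟩
    refine hK₀min _ hK' ?_
    exact lt_of_le_of_ne inf_le_left (fun heq => hz2 (by rw [← heq] at hz1; exact hz1.2))
  have hann : ∀ c : R, (∀ j, dd j * c = 0) → c = 0 := by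
    intro c hc
    have hzmem : (op c : Rᵐᵒᵖ) ∈ ⨅ j, kerOf (dd j) := by
      rw [Submodule.mem_iInf]
      intro j
      exact (memker _ _).2 (by simpa using hc j)
    refine hzero c ?_
    intro r hr
    have h8 := hsub r hr hzmem
    have h9 := (memker _ _).1 h8
    simpa using h9
  obtain ⟨u, hu⟩ := mem_of_rann_le dd 1 (fun c hc => by rw [hann c hc, mul_zero])
  have h1D : (1 : R) ∈ D := by
    rw [hu]
    exact Submodule.sum_mem _ (fun j _ => by
      have h10 : u j * dd j = u j • dd j := rfl
      rw [h10]
      exact Submodule.smul_mem _ _ (hddD j))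
  exact hD (Submodule.eq_top_iff'.2 (fun r => by
    have h11 : r = r • (1 : R) := by simp
    rw [h11]
    exact Submodule.smul_mem _ _ h1D))

end RingLemmas

section E12
variable {R : Type u} [Ring R] [Module.Injective R R]
variable {n : ℕ}

lemma separating_functional
    (hrann : ∀ D : Submodule R R, D ≠ ⊤ → ∃ g : R, g ≠ 0 ∧ ∀ r ∈ D, r * g = 0)
    (N' : Submodule R (Fin n → R)) (v₀ : Fin n → R) (hv : v₀ ∉ N') :
    ∃ w : Fin n → R, (∀ u ∈ N', ∑ i, u i * w i = 0) ∧ ∑ i, v₀ i * w i ≠ 0 := by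
  classical
  set D : Submodule R R := Submodule.comap (LinearMap.toSpanSingleton R (Fin n → R) v₀) N'
    with hDdef
  have hD : D ≠ ⊤ := by
    intro htop
    have h1 : (1 : R) ∈ D := htop ▸ Submodule.mem_top
    have h2 : (1 : R) • v₀ ∈ N' := h1
    rw [one_smul] at h2
    exact hv h2
  obtain ⟨g, hg0, hgD⟩ := hrann D hD
  obtain ⟨H, hH⟩ := extend_functional (A := R)
    ((N'.subtype).coprod (LinearMap.toSpanSingleton R (Fin n → R) v₀))
    ((LinearMap.toSpanSingleton R R g).comp (LinearMap.snd R N' R))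
    (fun w hw => by
      obtain ⟨uu, r⟩ := w
      simp only [LinearMap.coprod_apply, Submodule.coe_subtype,
        LinearMap.toSpanSingleton_apply] at hw
      have hrv : r • v₀ = -(uu : Fin n → R) := eq_neg_of_add_eq_zero_right hw
      have hrD : r ∈ D := by
        show r • v₀ ∈ N'
        rw [hrv]; exact neg_mem uu.2
      simp only [LinearMap.comp_apply, LinearMap.snd_apply, LinearMap.toSpanSingleton_apply,
        smul_eq_mul]
      exact hgD r hrD)
  set w : Fin n → R := fun i => H (fun j => if i = j then 1 else 0) with hwdef
  have hHval : ∀ v : Fin n → R, H v = ∑ i, v i * w i := by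
    intro v
    conv_lhs => rw [pi_eq_sum_univ v, map_sum]
    refine Finset.sum_congr rfl (fun i _ => ?_)
    rw [map_smul, smul_eq_mul, hwdef]
  refine ⟨w, fun uu huu => ?_, ?_⟩
  · have := hH ⟨⟨uu, huu⟩, 0⟩
    simp only [LinearMap.coprod_apply, Submodule.coe_subtype, LinearMap.comp_apply,
      LinearMap.snd_apply, LinearMap.toSpanSingleton_apply, zero_smul, add_zero,
      smul_eq_mul] at this
    rw [hHval] at this
    rw [this, zero_mul]
  · have := hH ⟨0, 1⟩
    simp only [LinearMap.coprod_apply, Submodule.coe_subtype, LinearMap.comp_apply,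
      LinearMap.snd_apply, LinearMap.toSpanSingleton_apply, one_smul,
      Submodule.coe_zero, zero_add] at this
    rw [hHval] at this
    rw [this]
    exact hg0

/-- the linear functional `v ↦ ∑ i, v i * c i` -/
def funcOf (c : Fin n → R) : (Fin n → R) →ₗ[R] R :=
  ∑ i, (LinearMap.toSpanSingleton R R (c i)).comp (LinearMap.proj i)

omit [Module.Injective R R] in
lemma funcOf_apply (c v : Fin n → R) : funcOf c v = ∑ i, v i * c i := by
  simp [funcOf, LinearMap.sum_apply, LinearMap.toSpanSingleton_apply, smul_eq_mul]

lemma embed_in_free [IsArtinian R R]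
    (hrann : ∀ D : Submodule R R, D ≠ ⊤ → ∃ g : R, g ≠ 0 ∧ ∀ r ∈ D, r * g = 0)
    (N' : Submodule R (Fin n → R)) :
    ∃ (p : ℕ) (w : Fin p → Fin n → R),
      ∀ v, (∀ k, ∑ i, v i * w k i = 0) ↔ v ∈ N' := by
  classical
  let S : Set (Submodule R (Fin n → R)) :=
    {K | ∃ (p : ℕ) (w : Fin p → Fin n → R),
      (∀ k, ∀ u ∈ N', ∑ i, u i * w k i = 0) ∧ K = ⨅ k, LinearMap.ker (funcOf (w k))}
  have hSne : S.Nonempty := ⟨⊤, 0, fun k => k.elim0, fun k => k.elim0, (iInf_of_empty _).symm⟩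
  obtain ⟨K₀, hK₀S, hK₀min⟩ :=
    (IsWellFounded.wf (α := Submodule R (Fin n → R)) (r := (· < ·))).has_min S hSne
  obtain ⟨p, w, hwvan, rfl⟩ := hK₀S
  refine ⟨p, w, fun v => ⟨fun hall => ?_, fun hmem k => hwvan k v hmem⟩⟩
  by_contra hvmem
  obtain ⟨ws, hws1, hws2⟩ := separating_functional hrann N' v hvmem
  have hK' : ((⨅ k, LinearMap.ker (funcOf (w k))) ⊓ LinearMap.ker (funcOf ws)) ∈ S := by
    refine ⟨p + 1, Fin.cons ws w, ?_, ?_⟩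
    · intro k
      refine Fin.cases ?_ ?_ k
      · intro uu huu
        simpa [Fin.cons_zero] using hws1 uu huu
      · intro kk uu huu
        simpa [Fin.cons_succ] using hwvan kk uu huu
    · ext zz
      simp only [Submodule.mem_inf, Submodule.mem_iInf, LinearMap.mem_ker]
      constructor
      · rintro ⟨h1, h2⟩ k
        refine Fin.cases ?_ ?_ k
        · simpa [Fin.cons_zero] using h2
        · intro kk; simpa [Fin.cons_succ] using h1 kk
      · intro hallk
        exact ⟨fun kk => by simpa [Fin.cons_succ] using hallk kk.succ,
          by simpa [Fin.cons_zero] using hallk 0⟩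
  refine hK₀min _ hK' (lt_of_le_of_ne inf_le_left (fun heq => ?_))
  have hvK : v ∈ ⨅ k, LinearMap.ker (funcOf (w k)) := by
    rw [Submodule.mem_iInf]
    intro k
    rw [LinearMap.mem_ker, funcOf_apply]
    exact hall k
  rw [← heq] at hvK
  have h9 : funcOf ws v = 0 := hvK.2
  rw [funcOf_apply] at h9
  exact hws2 h9

end E12

section Main
variable {R : Type u} [Ring R] {M : Type v} [AddCommGroup M] [Module Rᵐᵒᵖ M]

lemma op_sum' {κ : Type*} (t : Finset κ) (g : κ → R) :
    op (∑ i ∈ t, g i) = ∑ i ∈ t, op (g i) :=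
  map_sum (MulOpposite.opAddEquiv (α := R)) g t

/-- The key inductive lemma: a relation among generators of a submodule `N` of a
finite free module trivializes, by induction on `N`. -/
lemma main_induction [Module.Injective R R] [Module.Injective Rᵐᵒᵖ Rᵐᵒᵖ]
    [IsArtinian R R] [IsArtinian Rᵐᵒᵖ Rᵐᵒᵖ]
    (hM : OnePFlat R M 1) {n : ℕ} :
    ∀ (N : Submodule R (Fin n → R)) (ι : Type) (_ : Fintype ι) (ν : ι → Fin n → R),
      Submodule.span R (Set.range ν) = N →
      ∀ (y : ι → M), (∀ i, ∑ j, op (ν j i) • y j = 0) →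
      ∃ (κ : Type) (_ : Fintype κ) (z : κ → M) (c : κ → ι → R),
        (∀ l i, ∑ j, c l j * ν j i = 0) ∧ ∀ j, y j = ∑ l, op (c l j) • z l := by
  classical
  have hrann : ∀ D : Submodule R R, D ≠ ⊤ → ∃ g : R, g ≠ 0 ∧ ∀ r ∈ D, r * g = 0 :=
    fun D hD => rann_ne_zero hD
  intro N
  induction N using WellFoundedLT.induction with
  | _ N IH =>
  intro ι _ ν hspan y hrel
  have hνmem : ∀ j, ν j ∈ N := fun j => hspan ▸ Submodule.subset_span (Set.mem_range_self j)
  by_cases hbot : N = ⊥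
  · have hν0 : ∀ j, ν j = 0 := by
      intro j
      have h1 := hνmem j
      rw [hbot, Submodule.mem_bot] at h1
      exact h1
    refine ⟨ι, inferInstance, y, fun l j => if j = l then 1 else 0, ?_, ?_⟩
    · intro l i
      refine Finset.sum_eq_zero (fun j _ => ?_)
      rw [hν0 j]
      simp
    · intro j
      rw [Finset.sum_eq_single j]
      · simp
      · intro l _ hlj
        show op (if j = l then (1:R) else 0) • y l = 0
        rw [if_neg (fun hh => hlj hh.symm), op_zero, zero_smul]
      · intro hj; exact absurd (Finset.mem_univ j) hj
  · have hfg : N.FG := by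
      rw [← hspan]
      exact Submodule.fg_span (Set.finite_range ν)
    have hcomp := (Submodule.fg_iff_compact N).mp hfg
    have hco := CompleteLattice.Iic_coatomic_of_compact_element hcomp
    rcases hco.eq_top_or_exists_le_coatom (⟨⊥, Set.mem_Iic.mpr bot_le⟩ : ↥(Set.Iic N)) with htop | ⟨m, hmco, _⟩
    · exact absurd (congrArg Subtype.val htop).symm hbot
    set N' : Submodule R (Fin n → R) := m.1 with hN'def
    have hN'le : N' ≤ N := m.2
    have hN'lt : N' < N := by
      refine lt_of_le_of_ne hN'le (fun heq => hmco.1 ?_)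
      exact Subtype.ext heq
    have hmaxK : ∀ K, N' < K → K ≤ N → K = N := by
      intro K hK hKN
      have h0 := hmco.2 ⟨K, Set.mem_Iic.mpr hKN⟩ (Subtype.mk_lt_mk.mpr hK)
      exact congrArg Subtype.val h0
    have hsup : ∀ v, v ∈ N → v ∉ N' → (N' ⊔ Submodule.span R {v}) = N := by
      intro v hvN hvN'
      refine hmaxK _ ?_ (sup_le hN'le ((Submodule.span_singleton_le_iff_mem v N).mpr hvN))
      refine lt_of_le_of_ne le_sup_left (fun heq => hvN' ?_)
      have h0 : v ∈ N' ⊔ Submodule.span R {v} :=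
        Submodule.mem_sup_right (Submodule.mem_span_singleton_self v)
      rw [← heq] at h0
      exact h0
    have hj₀ : ∃ j₀, ν j₀ ∉ N' := by
      by_contra hall
      push_neg at hall
      have h1 : N ≤ N' := by
        rw [← hspan]
        refine Submodule.span_le.mpr ?_
        rintro _ ⟨j, rfl⟩
        exact hall j
      exact absurd (hN'lt.trans_le h1) (lt_irrefl N')
    obtain ⟨j₀, hj₀⟩ := hj₀
    obtain ⟨p, w, hw⟩ := embed_in_free hrann N'
    set μ : ι → Fin p → R := fun j k => ∑ i, ν j i * w k i with hμdef
    have hμrel : ∀ k, ∑ j, op (μ j k) • y j = 0 := by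
      intro k
      have h1 : ∀ j, op (μ j k) • y j = ∑ i, op (w k i) • (op (ν j i) • y j) := by
        intro j
        rw [hμdef]
        rw [op_sum', Finset.sum_smul]
        refine Finset.sum_congr rfl (fun i _ => ?_)
        rw [op_mul, mul_smul]
      calc ∑ j, op (μ j k) • y j
          = ∑ j, ∑ i, op (w k i) • (op (ν j i) • y j) := Finset.sum_congr rfl (fun j _ => h1 j)
        _ = ∑ i, ∑ j, op (w k i) • (op (ν j i) • y j) := Finset.sum_comm
        _ = ∑ i : Fin n, op (w k i) • (∑ j, op (ν j i) • y j) := by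
            refine Finset.sum_congr rfl (fun i _ => ?_)
            rw [Finset.smul_sum]
        _ = 0 := by
            refine Finset.sum_eq_zero (fun i _ => ?_)
            rw [hrel i, smul_zero]
    set D : Submodule R R := Submodule.comap (LinearMap.toSpanSingleton R (Fin n → R) (ν j₀)) N'
      with hDdef
    have hDprop : ∀ c : R, c ∈ D → ∀ k, c * μ j₀ k = 0 := by
      intro c hc k
      have h1 : ∀ k, ∑ i, (c • ν j₀) i * w k i = 0 := (hw (c • ν j₀)).mpr hc
      have h2 := h1 k
      calc c * μ j₀ k = ∑ i, c * (ν j₀ i * w k i) := by rw [hμdef, Finset.mul_sum]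
        _ = ∑ i, (c • ν j₀) i * w k i := by
            refine Finset.sum_congr rfl (fun i _ => ?_)
            rw [Pi.smul_apply, smul_eq_mul, mul_assoc]
        _ = 0 := h2
    have hk₀ : ∃ k₀, μ j₀ k₀ ≠ 0 := by
      by_contra hall
      push_neg at hall
      exact hj₀ ((hw (ν j₀)).mp (fun k => hall k))
    obtain ⟨k₀, hk₀⟩ := hk₀
    have hannD : ∀ c : R, c * μ j₀ k₀ = 0 → c ∈ D := by
      intro c hc
      by_contra hcD
      have hcν : c • ν j₀ ∉ N' := hcD
      have hsupc := hsup (c • ν j₀) (Submodule.smul_mem _ _ (hνmem j₀)) hcν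
      have h1 : ν j₀ ∈ N' ⊔ Submodule.span R {c • ν j₀} := by
        rw [hsupc]; exact hνmem j₀
      rw [Submodule.mem_sup] at h1
      obtain ⟨η, hη, x, hx, hsum⟩ := h1
      rw [Submodule.mem_span_singleton] at hx
      obtain ⟨r, rfl⟩ := hx
      have hmem : (1 - r * c) ∈ D := by
        show (1 - r * c) • ν j₀ ∈ N'
        have h2 : (1 - r * c) • ν j₀ = η := by
          rw [sub_smul, one_smul, mul_smul]
          exact (eq_sub_of_add_eq hsum).symm
        rw [h2]; exact hη
      have h3 := hDprop _ hmem k₀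
      rw [sub_mul, one_mul, mul_assoc, hc, mul_zero, sub_zero] at h3
      exact hk₀ h3
    have hγfull : ∀ c : R, c * μ j₀ k₀ = 0 → ∀ k, c * μ j₀ k = 0 :=
      fun c hc k => hDprop c (hannD c hc) k
    have hdecomp : ∀ j, ∃ s0 : R, ν j - s0 • ν j₀ ∈ N' := by
      intro j
      have h1 : ν j ∈ N' ⊔ Submodule.span R {ν j₀} := by
        rw [hsup (ν j₀) (hνmem j₀) hj₀]; exact hνmem j
      rw [Submodule.mem_sup] at h1
      obtain ⟨η, hη, x, hx, hsum⟩ := h1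
      rw [Submodule.mem_span_singleton] at hx
      obtain ⟨s0, rfl⟩ := hx
      refine ⟨s0, ?_⟩
      have h2 : ν j - s0 • ν j₀ = η := (eq_sub_of_add_eq hsum).symm
      rw [h2]; exact hη
    choose sc hsc using hdecomp
    have hμs : ∀ j k, μ j k = sc j * μ j₀ k := by
      intro j k
      have h1 := (hw _).mpr (hsc j) k
      have h2 : ∑ i, (ν j i * w k i - sc j * (ν j₀ i * w k i)) = 0 := by
        refine Eq.trans (Finset.sum_congr rfl (fun i _ => ?_)) h1
        rw [Pi.sub_apply, Pi.smul_apply, smul_eq_mul, sub_mul, mul_assoc]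
      rw [Finset.sum_sub_distrib, ← Finset.mul_sum] at h2
      have h3 : μ j k - sc j * μ j₀ k = 0 := h2
      exact sub_eq_zero.mp h3
    set Y : M := ∑ j, op (sc j) • y j with hYdef
    have hYkill : op (μ j₀ k₀) • Y = 0 := by
      rw [hYdef, Finset.smul_sum]
      have h1 : ∀ j, op (μ j₀ k₀) • (op (sc j) • y j) = op (μ j k₀) • y j := by
        intro j
        rw [← mul_smul, ← op_mul, ← hμs j k₀]
      rw [Finset.sum_congr rfl (fun j _ => h1 j)]
      exact hμrel k₀
    obtain ⟨L₁, z₁, c₁, hc₁, hYrep⟩ := hM (fun _ => μ j₀ k₀) (fun _ => Y) (by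
      rw [Fin.sum_univ_one]
      exact hYkill)
    have hγkill : ∀ l k, c₁ l 0 * μ j₀ k = 0 := by
      intro l k
      refine hγfull _ ?_ k
      have h1 := hc₁ l
      rw [Fin.sum_univ_one] at h1
      exact h1
    have hYγ : Y = ∑ l, op (c₁ l 0) • z₁ l := hYrep 0
    set C : (Sum (Fin L₁) ι) → ι → R := Sum.elim
      (fun l j => if j = j₀ then c₁ l 0 else 0)
      (fun j' j => (if j = j' then 1 else 0) - (if j = j₀ then sc j' else 0)) with hCdef
    set Z : (Sum (Fin L₁) ι) → M := Sum.elim z₁ y with hZdef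
    set ρ : (Sum (Fin L₁) ι) → Fin n → R := fun ℓ => ∑ j, C ℓ j • ν j with hρdef
    have hρapply : ∀ ℓ i, ρ ℓ i = ∑ j, C ℓ j * ν j i := by
      intro ℓ i
      show (∑ j, C ℓ j • ν j) i = ∑ j, C ℓ j * ν j i
      rw [Finset.sum_apply]
      rfl
    have hρ_inl : ∀ l, ρ (Sum.inl l) = c₁ l 0 • ν j₀ := by
      intro l
      show ∑ j, (if j = j₀ then c₁ l 0 else 0) • ν j = _
      rw [Finset.sum_eq_single j₀]
      · rw [if_pos rfl]
      · intro j _ hj; rw [if_neg hj, zero_smul]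
      · intro hmem; exact absurd (Finset.mem_univ _) hmem
    have hρ_inr : ∀ j', ρ (Sum.inr j') = ν j' - sc j' • ν j₀ := by
      intro j'
      show ∑ j, ((if j = j' then (1:R) else 0) - (if j = j₀ then sc j' else 0)) • ν j = _
      have h1 : ∀ j, ((if j = j' then (1:R) else 0) - (if j = j₀ then sc j' else 0)) • ν j
          = (if j = j' then (1:R) else 0) • ν j - (if j = j₀ then sc j' else 0) • ν j :=
        fun j => sub_smul _ _ _
      rw [Finset.sum_congr rfl (fun j _ => h1 j), Finset.sum_sub_distrib]
      congr 1
      · rw [Finset.sum_eq_single j']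
        · rw [if_pos rfl, one_smul]
        · intro j _ hj; rw [if_neg hj, zero_smul]
        · intro hmem; exact absurd (Finset.mem_univ _) hmem
      · rw [Finset.sum_eq_single j₀]
        · rw [if_pos rfl]
        · intro j _ hj; rw [if_neg hj, zero_smul]
        · intro hmem; exact absurd (Finset.mem_univ _) hmem
    have hρmem : ∀ ℓ, ρ ℓ ∈ N' := by
      rintro (l | j')
      · rw [hρ_inl]
        refine (hw _).mp (fun k => ?_)
        have h1 : ∑ i, (c₁ l 0 • ν j₀) i * w k i = c₁ l 0 * μ j₀ k := by
          rw [hμdef, Finset.mul_sum]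
          refine Finset.sum_congr rfl (fun i _ => ?_)
          rw [Pi.smul_apply, smul_eq_mul, mul_assoc]
        rw [h1]
        exact hγkill l k
      · rw [hρ_inr]
        exact hsc j'
    have hyC : ∀ j, y j = ∑ ℓ, op (C ℓ j) • Z ℓ := by
      intro j
      rw [Fintype.sum_sum_type]
      by_cases hj : j = j₀
      · subst hj
        have h1 : ∑ l, op (C (Sum.inl l) j) • Z (Sum.inl l) = Y := by
          rw [hYγ]
          refine Finset.sum_congr rfl (fun l _ => ?_)
          show op (if j = j then c₁ l 0 else 0) • z₁ l = _
          rw [if_pos rfl]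
        have h2 : ∑ j', op (C (Sum.inr j') j) • Z (Sum.inr j') = y j - Y := by
          have h3 : ∀ j', op (C (Sum.inr j') j) • Z (Sum.inr j')
              = op (if j = j' then (1:R) else 0) • y j' - op (sc j') • y j' := by
            intro j'
            show op ((if j = j' then (1:R) else 0) - (if j = j then sc j' else 0)) • y j' = _
            rw [if_pos rfl, op_sub, sub_smul]
          rw [Finset.sum_congr rfl (fun j' _ => h3 j'), Finset.sum_sub_distrib]
          congr 1
          · rw [Finset.sum_eq_single j
              (fun j' _ hj' => by rw [if_neg (fun hh => hj' hh.symm), op_zero, zero_smul])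
              (fun hmem => absurd (Finset.mem_univ _) hmem)]
            rw [if_pos rfl, op_one, one_smul]
        rw [h1, h2]
        abel
      · have h1 : ∑ l, op (C (Sum.inl l) j) • Z (Sum.inl l) = 0 := by
          refine Finset.sum_eq_zero (fun l _ => ?_)
          show op (if j = j₀ then c₁ l 0 else 0) • z₁ l = 0
          rw [if_neg hj, op_zero, zero_smul]
        have h2 : ∑ j', op (C (Sum.inr j') j) • Z (Sum.inr j') = y j := by
          have h3 : ∀ j', op (C (Sum.inr j') j) • Z (Sum.inr j')
              = op (if j = j' then (1:R) else 0) • y j' := by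
            intro j'
            show op ((if j = j' then (1:R) else 0) - (if j = j₀ then sc j' else 0)) • y j' = _
            rw [if_neg hj, sub_zero]
          rw [Finset.sum_congr rfl (fun j' _ => h3 j')]
          rw [Finset.sum_eq_single j]
          · rw [if_pos rfl, op_one, one_smul]
          · intro j' _ hj'; rw [if_neg (fun hh => hj' hh.symm), op_zero, zero_smul]
          · intro hmem; exact absurd (Finset.mem_univ _) hmem
        rw [h1, h2, zero_add]
    have hρrel : ∀ i, ∑ ℓ, op (ρ ℓ i) • Z ℓ = 0 := by
      intro i
      have h1 : ∀ ℓ, op (ρ ℓ i) • Z ℓ = ∑ j, op (ν j i) • (op (C ℓ j) • Z ℓ) := by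
        intro ℓ
        rw [hρapply, op_sum', Finset.sum_smul]
        refine Finset.sum_congr rfl (fun j _ => ?_)
        rw [op_mul, mul_smul]
      rw [Finset.sum_congr rfl (fun ℓ _ => h1 ℓ), Finset.sum_comm]
      have h2 : ∀ j, ∑ ℓ, op (ν j i) • (op (C ℓ j) • Z ℓ) = op (ν j i) • y j := by
        intro j
        rw [← Finset.smul_sum, ← hyC j]
      rw [Finset.sum_congr rfl (fun j _ => h2 j)]
      exact hrel i
    have hspanρlt : Submodule.span R (Set.range ρ) < N := by
      refine lt_of_le_of_lt ?_ hN'lt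
      refine Submodule.span_le.mpr ?_
      rintro _ ⟨ℓ, rfl⟩
      exact hρmem ℓ
    obtain ⟨κ, hκ, x, e, hering, hemod⟩ :=
      IH (Submodule.span R (Set.range ρ)) hspanρlt (Sum (Fin L₁) ι) inferInstance ρ rfl Z hρrel
    refine ⟨κ, hκ, x, fun mm j => ∑ ℓ, e mm ℓ * C ℓ j, ?_, ?_⟩
    · intro mm i
      have h1 : ∀ j, (∑ ℓ, e mm ℓ * C ℓ j) * ν j i = ∑ ℓ, e mm ℓ * (C ℓ j * ν j i) := by
        intro j
        rw [Finset.sum_mul]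
        refine Finset.sum_congr rfl (fun ℓ _ => mul_assoc _ _ _)
      rw [Finset.sum_congr rfl (fun j _ => h1 j), Finset.sum_comm]
      have h2 : ∀ ℓ, ∑ j, e mm ℓ * (C ℓ j * ν j i) = e mm ℓ * ρ ℓ i := by
        intro ℓ
        rw [← Finset.mul_sum, ← hρapply]
      rw [Finset.sum_congr rfl (fun ℓ _ => h2 ℓ)]
      exact hering mm i
    · intro j
      rw [hyC j]
      have h1 : ∀ ℓ, op (C ℓ j) • Z ℓ = op (C ℓ j) • (∑ mm, op (e mm ℓ) • x mm) := by
        intro ℓ; rw [← hemod ℓ]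
      rw [Finset.sum_congr rfl (fun ℓ _ => h1 ℓ)]
      have h2 : ∀ ℓ, op (C ℓ j) • (∑ mm, op (e mm ℓ) • x mm)
          = ∑ mm, op (e mm ℓ * C ℓ j) • x mm := by
        intro ℓ
        rw [Finset.smul_sum]
        refine Finset.sum_congr rfl (fun mm _ => ?_)
        rw [← mul_smul, ← op_mul]
      rw [Finset.sum_congr rfl (fun ℓ _ => h2 ℓ), Finset.sum_comm]
      refine Finset.sum_congr rfl (fun mm _ => ?_)
      rw [op_sum', Finset.sum_smul]

end Main

end Stmt9Aux

open MulOpposite in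
/-- over a quasi-Frobenius ring (two-sided Artinian and two-sided
self-injective), a right `R`-module `M` is flat iff for every principal left ideal
`Ra` the natural map `M ⊗_R Ra → M` is injective, i.e. iff `M` is `(1,1)`-flat. -/
theorem stmt_9 (R : Type*) [Ring R]
    [IsArtinian R R] [IsArtinian Rᵐᵒᵖ Rᵐᵒᵖ]
    [Module.Injective R R] [Module.Injective Rᵐᵒᵖ Rᵐᵒᵖ]
    (M : Type*) [AddCommGroup M] [Module Rᵐᵒᵖ M] :
    RightFlat R M ↔ OnePFlat R M 1 := by
  constructor
  · intro h
    exact h 1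
  · intro h11 q a y hrel
    classical
    set ν : Fin q → Fin 1 → R := fun j _ => a j with hνdef
    obtain ⟨κ, hκ, z, c, hring, hmod⟩ := Stmt9Aux.main_induction (R := R) (M := M) h11
      (Submodule.span R (Set.range ν)) (Fin q) inferInstance ν rfl y
      (fun i => by
        have h1 : ∀ j, op (ν j i) • y j = op (a j) • y j := fun j => rfl
        rw [Finset.sum_congr rfl (fun j _ => h1 j)]
        exact hrel)
    set e := Fintype.equivFin κ with hedef
    refine ⟨Fintype.card κ, fun l => z (e.symm l), fun l i => c (e.symm l) i, ?_, ?_⟩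
    · intro l
      exact hring (e.symm l) 0
    · intro i
      rw [hmod i]
      exact (Equiv.sum_comp e.symm (fun l => op (c l i) • z l)).symm
end

section
/- Let R be a commutative local ring with maximal ideal P satisfying P² = 0, and let q be a positive integer. Then every (1,q)-injective R-module is (n,q)-injective for all positive integers n. -/
set_option maxHeartbeats 1600000
set_option synthInstance.maxHeartbeats 200000

/-- An `R`-module `M` is `(n,q)`-injective if for every submodule `K` of the free
module `Rⁿ` generated by at most `q` elements, every homomorphism `K → M` extends
to `Rⁿ`. -/
def NQInjective (R : Type*) [Ring R] (M : Type*) [AddCommGroup M] [Module R M]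
    (n q : ℕ) : Prop :=
  ∀ K : Submodule R (Fin n → R),
    (∃ s : Finset (Fin n → R), s.card ≤ q ∧ Submodule.span R (s : Set (Fin n → R)) = K) →
    ∀ f : K →ₗ[R] M, ∃ g : (Fin n → R) →ₗ[R] M, ∀ x : K, g x.1 = f x

open Submodule IsLocalRing Module


lemma lemB {R : Type*} [CommRing R] [IsLocalRing R]
    {V : Type*} [AddCommGroup V] [Module R V]
    {q : ℕ} {W L : Submodule R V} (hLW : L ≤ W)
    (s : Finset V) (hs : s.card ≤ q) (hspan : span R (s : Set V) = W)
    (htor : ∀ x ∈ W, ∀ a ∈ maximalIdeal R, a • x = (0 : V)) :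
    ∃ t : Finset V, t.card ≤ q ∧ span R (t : Set V) = L := by
  classical
  set P := maximalIdeal R with hP
  have tor : Module.IsTorsionBySet R W (P : Set R) := by
    intro x a
    exact Subtype.ext (by
      rw [Submodule.coe_smul, ZeroMemClass.coe_zero]
      exact htor x.1 x.2 a.1 a.2)
  letI : Module (ResidueField R) W := tor.module
  have mk_smul : ∀ (r : R) (x : W), (residue R r) • x = r • x :=
    fun r x => tor.mk_smul r x
  have hsW : ∀ x ∈ s, x ∈ W := fun x hx => hspan ▸ subset_span hx
  set s₀ : Finset W := s.attach.image (fun x => (⟨x.1, hsW x.1 x.2⟩ : W)) with hs₀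
  have hs₀card : s₀.card ≤ q := le_trans (Finset.card_image_le.trans (by simp)) hs
  have himg : W.subtype '' (s₀ : Set W) = (s : Set V) := by
    ext y
    constructor
    · rintro ⟨w, hw, rfl⟩
      simp only [hs₀, Finset.coe_image, Set.mem_image] at hw
      obtain ⟨x, -, rfl⟩ := hw
      exact x.2
    · intro hy
      refine ⟨⟨y, hsW y hy⟩, ?_, rfl⟩
      simp only [hs₀, Finset.coe_image, Set.mem_image]
      exact ⟨⟨y, hy⟩, s.mem_attach _, rfl⟩
  have spanR_s₀ : span R (s₀ : Set W) = ⊤ := by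
    apply Submodule.map_injective_of_injective W.injective_subtype
    rw [Submodule.map_span, himg, hspan, Submodule.map_subtype_top]
  have spanRle : ∀ (u : Set W) (x : W), x ∈ span R u → x ∈ span (ResidueField R) u := by
    intro u x hx
    induction hx using Submodule.span_induction with
    | mem y hy => exact subset_span hy
    | zero => exact zero_mem _
    | add y z _ _ hy hz => exact add_mem hy hz
    | smul r y _ hy => rw [← mk_smul r y]; exact Submodule.smul_mem _ _ hy
  have spankle : ∀ (u : Set W) (x : W), x ∈ span (ResidueField R) u → x ∈ span R u := by
    intro u x hx
    induction hx using Submodule.span_induction with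
    | mem y hy => exact subset_span hy
    | zero => exact zero_mem _
    | add y z _ _ hy hz => exact add_mem hy hz
    | smul c y _ hy =>
      obtain ⟨r, rfl⟩ := residue_surjective (R := R) c
      rw [mk_smul r y]; exact Submodule.smul_mem _ _ hy
  have spank_s₀ : span (ResidueField R) (s₀ : Set W) = ⊤ := by
    rw [eq_top_iff]
    intro x _
    exact spanRle _ x (spanR_s₀ ▸ Submodule.mem_top)
  haveI : Module.Finite (ResidueField R) W := ⟨⟨s₀, spank_s₀⟩⟩
  have hrW : finrank (ResidueField R) W ≤ q := by
    have h1 : finrank (ResidueField R) (span (ResidueField R) (s₀ : Set W)) ≤ s₀.card :=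
      finrank_span_finset_le_card (R := ResidueField R) s₀
    rw [spank_s₀, finrank_top] at h1
    exact h1.trans hs₀card
  set Lc : Submodule R W := L.comap W.subtype with hLc
  set Lk : Submodule (ResidueField R) W :=
    { carrier := Lc
      add_mem' := fun h1 h2 => Lc.add_mem h1 h2
      zero_mem' := Lc.zero_mem
      smul_mem' := by
        intro c x hx
        obtain ⟨r, rfl⟩ := residue_surjective (R := R) c
        rw [mk_smul r x]
        exact Lc.smul_mem r hx } with hLk
  have memLk : ∀ x : W, x ∈ Lk ↔ x ∈ Lc := fun x => Iff.rfl
  let b := Module.finBasis (ResidueField R) Lk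
  have hcard2 : finrank (ResidueField R) Lk ≤ q := (Submodule.finrank_le Lk).trans hrW
  set t₀ : Finset W := Finset.univ.image (fun i => ((b i : Lk) : W)) with ht₀
  have ht₀card : t₀.card ≤ q := by
    refine le_trans Finset.card_image_le ?_
    simpa using hcard2
  have ht₀img : (t₀ : Set W) = Lk.subtype '' Set.range b := by
    ext y
    simp [ht₀]
  have spank_t₀ : span (ResidueField R) (t₀ : Set W) = Lk := by
    rw [ht₀img, Submodule.span_image, b.span_eq, Submodule.map_subtype_top]
  have spanR_t₀ : span R (t₀ : Set W) = Lc := by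
    apply le_antisymm
    · rw [Submodule.span_le]
      intro y hy
      have : y ∈ span (ResidueField R) (t₀ : Set W) := subset_span hy
      rw [spank_t₀] at this
      exact this
    · intro x hx
      have : x ∈ span (ResidueField R) (t₀ : Set W) := by rw [spank_t₀]; exact hx
      exact spankle _ x this
  refine ⟨t₀.image W.subtype, le_trans Finset.card_image_le ht₀card, ?_⟩
  rw [Finset.coe_image, ← Submodule.map_span, spanR_t₀, hLc,
    Submodule.map_comap_subtype, inf_eq_right.2 hLW]

lemma lemA {R : Type*} [CommRing R] [IsLocalRing R]
    (hP2 : maximalIdeal R ^ 2 = ⊥) {q n : ℕ}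
    (K : Submodule R (Fin (n + 2) → R)) (s : Finset (Fin (n + 2) → R))
    (hs : s.card ≤ q) (hspan : span R (s : Set (Fin (n + 2) → R)) = K) :
    ∃ (φ : (Fin (n + 2) → R) ≃ₗ[R] (Fin (n + 2) → R)) (t : Finset (Fin (n + 2) → R)),
      t.card ≤ q ∧
      span R (t : Set (Fin (n + 2) → R)) =
        (K.map (φ : (Fin (n + 2) → R) →ₗ[R] (Fin (n + 2) → R))) ⊓
          LinearMap.ker (LinearMap.proj (R := R) (φ := fun _ => R) (Fin.last (n + 1))) := by
  classical
  set lst := Fin.last (n + 1)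
  set πl : (Fin (n + 2) → R) →ₗ[R] R := LinearMap.proj lst with hπl
  by_cases hcase : ∀ x ∈ K, ∀ i, x i ∈ maximalIdeal R
  · -- torsion case
    refine ⟨LinearEquiv.refl R _, ?_⟩
    have hmap : K.map ((LinearEquiv.refl R (Fin (n+2) → R)) :
        (Fin (n + 2) → R) →ₗ[R] (Fin (n + 2) → R)) = K := by
      rw [LinearEquiv.refl_toLinearMap, Submodule.map_id]
    rw [hmap]
    have htor : ∀ x ∈ K, ∀ a ∈ maximalIdeal R, a • x = (0 : Fin (n+2) → R) := by
      intro x hx a ha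
      funext i
      have h2 : a * x i ∈ maximalIdeal R ^ 2 := by
        rw [pow_two]; exact Ideal.mul_mem_mul ha (hcase x hx i)
      rw [hP2] at h2
      simpa using h2
    exact lemB inf_le_left s hs hspan htor
  · -- unit case
    push_neg at hcase
    obtain ⟨x, hxK, i₀, hi₀⟩ := hcase
    have hu : IsUnit (x i₀) := by
      by_contra hnu
      exact hi₀ ((IsLocalRing.mem_maximalIdeal _).2 hnu)
    set e : Fin (n + 2) → R := (↑hu.unit⁻¹ : R) • x with he
    have heK : e ∈ K := K.smul_mem _ hxK
    have hei₀ : e i₀ = 1 := by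
      simp [he, IsUnit.val_inv_mul]
    set w : Fin (n + 2) → R := e - Pi.single i₀ 1 with hw
    have hw0 : w i₀ = 0 := by
      simp [hw, hei₀]
    set A : (Fin (n + 2) → R) →ₗ[R] (Fin (n + 2) → R) :=
      (LinearMap.proj (R := R) (φ := fun _ => R) i₀).smulRight w with hA
    have hAapp : ∀ y, A y = y i₀ • w := fun y => rfl
    have hAA : ∀ y, A (A y) = 0 := by
      intro y
      rw [hAapp, hAapp]
      simp [hw0]
    set τ : (Fin (n + 2) → R) ≃ₗ[R] (Fin (n + 2) → R) :=
      LinearEquiv.ofLinear (LinearMap.id - A) (LinearMap.id + A)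
        (by ext y; simp [hAA y, hAapp, hw0])
        (by ext y; simp [hAA y, hAapp, hw0]) with hτ
    set σ : (Fin (n + 2) → R) ≃ₗ[R] (Fin (n + 2) → R) :=
      LinearEquiv.funCongrLeft R R (Equiv.swap lst i₀) with hσ
    set φ := τ.trans σ with hφ
    have hφapp : ∀ y, φ y = fun j => (y - y i₀ • w) (Equiv.swap lst i₀ j) := by
      intro y; rfl
    set δ : Fin (n + 2) → R := Pi.single lst 1 with hδ
    have hφe : φ e = δ := by
      rw [hφapp]
      funext j
      rw [hδ, hei₀, one_smul, hw]
      simp only [Pi.sub_apply, sub_sub_cancel]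
      rw [Pi.single_apply, Pi.single_apply]
      congr 1
      rw [eq_iff_iff, Equiv.apply_eq_iff_eq_symm_apply, Equiv.symm_swap,
        Equiv.swap_apply_right]
    have hδK' : δ ∈ K.map (φ : (Fin (n + 2) → R) →ₗ[R] (Fin (n + 2) → R)) := ⟨e, heK, hφe⟩
    set K' := K.map (φ : (Fin (n + 2) → R) →ₗ[R] (Fin (n + 2) → R)) with hK'
    have hspan' : span R ((s.image φ : Finset _) : Set (Fin (n + 2) → R)) = K' := by
      rw [Finset.coe_image, ← LinearEquiv.coe_coe, ← Submodule.map_span, hspan]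
    set t : Finset (Fin (n + 2) → R) := (s.image φ).image (fun y => y - y lst • δ) with htdef
    refine ⟨φ, t, le_trans Finset.card_image_le (le_trans Finset.card_image_le hs), ?_⟩
    have htker : span R (t : Set (Fin (n + 2) → R)) ≤ LinearMap.ker πl := by
      rw [Submodule.span_le]
      rintro z hz
      simp only [htdef, Finset.coe_image, Set.mem_image] at hz
      obtain ⟨y, hy, rfl⟩ := hz
      simp [LinearMap.mem_ker, hπl, hδ]
    have htK' : span R (t : Set (Fin (n + 2) → R)) ≤ K' := by
      rw [Submodule.span_le]
      rintro z hz
      simp only [htdef, Finset.coe_image, Set.mem_image] at hz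
      obtain ⟨y, hy, rfl⟩ := hz
      have hyK' : y ∈ K' := by
        rw [← hspan']; exact subset_span (by simpa using hy)
      exact sub_mem hyK' (K'.smul_mem _ hδK')
    apply le_antisymm (le_inf htK' htker)
    rintro z ⟨hzK', hzker⟩
    have hsup : K' ≤ span R (t : Set (Fin (n + 2) → R)) ⊔ span R ({δ} : Set (Fin (n + 2) → R)) := by
      rw [← hspan', Submodule.span_le]
      intro y hy
      have h1 : y - y lst • δ ∈ span R (t : Set (Fin (n + 2) → R)) := subset_span (by
        simp only [htdef, Finset.coe_image, Set.mem_image]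
        exact ⟨y, by simpa using hy, rfl⟩)
      have h2 : y lst • δ ∈ span R ({δ} : Set (Fin (n + 2) → R)) :=
        Submodule.smul_mem _ _ (subset_span rfl)
      have h3 : y = (y - y lst • δ) + y lst • δ := by abel
      rw [h3]
      exact Submodule.add_mem_sup h1 h2
    obtain ⟨a, ha, b, hb, hab⟩ := Submodule.mem_sup.1 (hsup hzK')
    obtain ⟨r, rfl⟩ := Submodule.mem_span_singleton.1 hb
    have hπa : πl a = 0 := htker ha
    have hπz : πl z = 0 := hzker
    have hr : r = 0 := by
      have h4 : πl (a + r • δ) = πl z := by rw [hab]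
      rw [map_add, map_smul, hπa, hπz, zero_add] at h4
      have h5 : πl δ = 1 := by simp [hπl, hδ]
      rw [h5, smul_eq_mul, mul_one] at h4
      exact h4
    rw [← hab, hr, zero_smul, add_zero]
    exact ha

/-- over a commutative local ring whose maximal ideal `P` satisfies
`P² = 0`, every `(1,q)`-injective module is `(n,q)`-injective for all `n > 0`. -/
theorem stmt_11 (R : Type*) [CommRing R] [IsLocalRing R]
    (hP2 : IsLocalRing.maximalIdeal R ^ 2 = ⊥) (q : ℕ) (hq : 0 < q)
    (M : Type*) [AddCommGroup M] [Module R M]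
    (hM : NQInjective R M 1 q) :
    ∀ n : ℕ, 0 < n → NQInjective R M n q := by
  have key : ∀ n : ℕ, NQInjective R M (n + 1) q := by
    intro n
    induction n with
    | zero => exact hM
    | succ n IH =>
      intro K hK f
      classical
      obtain ⟨s, hs, hspan⟩ := hK
      obtain ⟨φ, t, ht, htspan⟩ := lemA hP2 K s hs hspan
      set lst := Fin.last (n + 1) with hlst
      set πl : (Fin (n + 2) → R) →ₗ[R] R := LinearMap.proj lst with hπl
      set pl : (Fin (n + 2) → R) →ₗ[R] (Fin (n + 1) → R) :=
        LinearMap.funLeft R R Fin.castSucc with hpl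
      set jl : (Fin (n + 1) → R) →ₗ[R] (Fin (n + 2) → R) :=
        { toFun := fun v => Fin.snoc v 0
          map_add' := by
            intro a b
            funext i
            refine Fin.lastCases ?_ (fun j => ?_) i <;> simp
          map_smul' := by
            intro c a
            funext i
            refine Fin.lastCases ?_ (fun j => ?_) i <;> simp } with hjl
      have hsnoc : ∀ z : Fin (n + 2) → R, z lst = 0 → jl (pl z) = z := by
        intro z hz
        funext i
        refine Fin.lastCases ?_ (fun j => ?_) i
        · simp only [hjl, LinearMap.coe_mk, AddHom.coe_mk, Fin.snoc_last]
          exact hz.symm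
        · simp only [hjl, LinearMap.coe_mk, AddHom.coe_mk, Fin.snoc_castSucc, hpl,
            LinearMap.funLeft_apply]
      set K' := K.map (φ : (Fin (n + 2) → R) →ₗ[R] (Fin (n + 2) → R)) with hK'
      set s' : Finset (Fin (n + 2) → R) := s.image φ with hs'
      have hs'card : s'.card ≤ q := Finset.card_image_le.trans hs
      have hspan' : span R (s' : Set (Fin (n + 2) → R)) = K' := by
        rw [hs', Finset.coe_image, ← LinearEquiv.coe_coe, ← Submodule.map_span, hspan]
      set eK := K.equivMapOfInjective (φ : (Fin (n + 2) → R) →ₗ[R] (Fin (n + 2) → R))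
        ((φ : (Fin (n + 2) → R) ≃ₗ[R] (Fin (n + 2) → R)).injective) with heK
      set f' : K' →ₗ[R] M := f.comp eK.symm.toLinearMap with hf'
      set L := K' ⊓ LinearMap.ker πl with hL
      set L₀ := L.map pl with hL₀
      have hjmem : ∀ v ∈ L₀, jl v ∈ K' := by
        rintro v ⟨z, hz, rfl⟩
        have hz2 : z lst = 0 := by
          have h5 := (Submodule.mem_inf.1 hz).2
          rwa [LinearMap.mem_ker, hπl, LinearMap.proj_apply] at h5
        rw [hsnoc z hz2]
        exact (Submodule.mem_inf.1 hz).1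
      set f'' : L₀ →ₗ[R] M := f'.comp (jl.restrict hjmem) with hf''
      obtain ⟨g, hg⟩ := IH L₀ ⟨t.image pl, Finset.card_image_le.trans ht, by
        rw [Finset.coe_image, ← Submodule.map_span, htspan, hL₀, hL]⟩ f''
      set h : K' →ₗ[R] M := f' - ((g.comp pl).comp K'.subtype) with hh
      have hvanish : ∀ z : K', z.1 ∈ LinearMap.ker πl → h z = 0 := by
        intro z hz
        have hz2 : z.1 lst = 0 := by
          rwa [LinearMap.mem_ker, hπl, LinearMap.proj_apply] at hz
        have hmem : pl z.1 ∈ L₀ := ⟨z.1, Submodule.mem_inf.2 ⟨z.2, hz⟩, rfl⟩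
        have h1 : g (pl z.1) = f'' ⟨pl z.1, hmem⟩ := hg ⟨pl z.1, hmem⟩
        have h2 : f'' ⟨pl z.1, hmem⟩ = f' ⟨jl (pl z.1), hjmem _ hmem⟩ := rfl
        have h3 : (⟨jl (pl z.1), hjmem _ hmem⟩ : K') = z := Subtype.ext (hsnoc z.1 hz2)
        have : h z = f' z - g (pl z.1) := rfl
        rw [this, h1, h2, h3, sub_self]
      set π1 : (Fin (n + 2) → R) →ₗ[R] (Fin 1 → R) :=
        LinearMap.pi (fun _ => πl) with hπ1
      set g2 : K' →ₗ[R] (Fin 1 → R) := π1.comp K'.subtype with hg2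
      set I₁ := LinearMap.range g2 with hI₁
      have hI₁span : span R ((s'.image π1 : Finset (Fin 1 → R)) : Set (Fin 1 → R)) = I₁ := by
        rw [Finset.coe_image, ← Submodule.map_span, hspan', hI₁, hg2,
          LinearMap.range_comp, Submodule.range_subtype]
      have hker2 : LinearMap.ker g2 ≤ LinearMap.ker h := by
        intro z hz
        rw [LinearMap.mem_ker] at hz ⊢
        apply hvanish
        rw [LinearMap.mem_ker]
        have : (g2 z) 0 = πl z.1 := rfl
        rw [hz] at this
        exact this.symm
      set f₁ : I₁ →ₗ[R] M :=
        ((LinearMap.ker g2).liftQ h hker2).comp g2.quotKerEquivRange.symm.toLinearMap with hf₁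
      have hf₁app : ∀ z : K', f₁ ⟨g2 z, LinearMap.mem_range_self g2 z⟩ = h z := by
        intro z
        have h1 : g2.quotKerEquivRange (Submodule.Quotient.mk z)
            = ⟨g2 z, LinearMap.mem_range_self g2 z⟩ :=
          Subtype.ext (LinearMap.quotKerEquivRange_apply_mk g2 z)
        have h2 : g2.quotKerEquivRange.symm ⟨g2 z, LinearMap.mem_range_self g2 z⟩
            = Submodule.Quotient.mk z := by
          rw [← h1, LinearEquiv.symm_apply_apply]
        rw [hf₁, LinearMap.comp_apply, LinearEquiv.coe_toLinearMap, h2, Submodule.liftQ_apply]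
      obtain ⟨g₁, hg₁⟩ := hM I₁ ⟨s'.image π1, Finset.card_image_le.trans hs'card, hI₁span⟩ f₁
      set m0 : M := g₁ (fun _ => 1) with hm0
      have hsm : ∀ r : R, g₁ (fun _ => r) = r • m0 := by
        intro r
        rw [hm0, ← map_smul]
        congr 1
        funext i
        simp
      set G' : (Fin (n + 2) → R) →ₗ[R] M := (g.comp pl) + πl.smulRight m0 with hG'
      have hG'app : ∀ z : K', G' z.1 = f' z := by
        intro z
        have h1 : G' z.1 = g (pl z.1) + πl z.1 • m0 := rfl
        have h2 : πl z.1 • m0 = g₁ (g2 z) := by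
          rw [← hsm]
          congr 1
        have h3 : g₁ (g2 z) = f₁ ⟨g2 z, LinearMap.mem_range_self g2 z⟩ :=
          hg₁ ⟨g2 z, LinearMap.mem_range_self g2 z⟩
        have h4 : h z = f' z - g (pl z.1) := rfl
        rw [h1, h2, h3, hf₁app z, h4]
        abel
      refine ⟨G'.comp (φ : (Fin (n + 2) → R) →ₗ[R] (Fin (n + 2) → R)), ?_⟩
      intro x
      have hmem : φ x.1 ∈ K' := Submodule.mem_map_of_mem x.2
      have h1 : G'.comp (φ : (Fin (n + 2) → R) →ₗ[R] (Fin (n + 2) → R)) x.1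
          = G' ((⟨φ x.1, hmem⟩ : K') : Fin (n + 2) → R) := rfl
      have h2 : eK x = ⟨φ x.1, hmem⟩ :=
        Subtype.ext (Submodule.coe_equivMapOfInjective_apply _ _ K x)
      have h3 : f' ⟨φ x.1, hmem⟩ = f x := by
        rw [hf', LinearMap.comp_apply, LinearEquiv.coe_toLinearMap, ← h2,
          LinearEquiv.symm_apply_apply]
      rw [h1, hG'app ⟨φ x.1, hmem⟩, h3]
  intro n hn
  obtain ⟨m, rfl⟩ : ∃ m, n = m + 1 := ⟨n - 1, (Nat.succ_pred_eq_of_pos hn).symm⟩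
  exact key m
end

section
/- Let R be a commutative local ring with maximal ideal P satisfying P² = 0, and let q be a positive integer. Then every (1,q)-flat R-module is (n,q)-flat for all positive integers n. -/
/-- An `R`-module `M` is `(n,q)`-flat if for every submodule `K` of the free
module `Rⁿ` generated by at most `q` elements, the natural map
`M ⊗[R] K → M ⊗[R] Rⁿ` is injective. -/
def NQFlat (R : Type*) [CommRing R] (M : Type*) [AddCommGroup M] [Module R M]
    (n q : ℕ) : Prop :=
  ∀ K : Submodule R (Fin n → R),
    (∃ s : Finset (Fin n → R), s.card ≤ q ∧ Submodule.span R (s : Set (Fin n → R)) = K) →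
    Function.Injective (LinearMap.lTensor M K.subtype)

open LinearMap TensorProduct Submodule Function

section Aux

variable {R : Type*} [CommRing R] {M : Type*} [AddCommGroup M] [Module R M]

/-- Tensoring preserves injectivity of split monomorphisms. -/
lemma lTensor_injective_of_retract {A B : Type*} [AddCommGroup A] [Module R A]
    [AddCommGroup B] [Module R B] (f : A →ₗ[R] B) (g : B →ₗ[R] A)
    (h : g ∘ₗ f = LinearMap.id) :
    Function.Injective (LinearMap.lTensor M f) := by
  have h2 : (LinearMap.lTensor M g) ∘ₗ (LinearMap.lTensor M f) = LinearMap.id := by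
    rw [← LinearMap.lTensor_comp, h, LinearMap.lTensor_id]
  intro x y hxy
  have hx := DFunLike.congr_fun h2 x
  have hy := DFunLike.congr_fun h2 y
  simp only [LinearMap.comp_apply, LinearMap.id_apply] at hx hy
  rw [← hx, ← hy, hxy]

/-- Tensoring preserves bijective maps. -/
lemma lTensor_injective_of_bijective {A B : Type*} [AddCommGroup A] [Module R A]
    [AddCommGroup B] [Module R B] (f : A →ₗ[R] B) (h : Function.Bijective f) :
    Function.Injective (LinearMap.lTensor M f) := by
  have he : LinearMap.lTensor M f
      = (TensorProduct.congr (LinearEquiv.refl R M) (LinearEquiv.ofBijective f h)).toLinearMap := by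
    apply TensorProduct.ext'
    intro m a
    simp
  rw [he]
  exact (TensorProduct.congr (LinearEquiv.refl R M) (LinearEquiv.ofBijective f h)).injective

/-- An injective map between modules killed by the maximal ideal splits. -/
lemma exists_retraction_of_torsion [IsLocalRing R] {A B : Type*} [AddCommGroup A] [Module R A]
    [AddCommGroup B] [Module R B]
    (hA : Module.IsTorsionBySet R A (IsLocalRing.maximalIdeal R : Set R))
    (hB : Module.IsTorsionBySet R B (IsLocalRing.maximalIdeal R : Set R))
    (f : A →ₗ[R] B) (hf : Function.Injective f) :
    ∃ g : B →ₗ[R] A, g ∘ₗ f = LinearMap.id := by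
  set P := IsLocalRing.maximalIdeal R with hPdef
  letI : Field (R ⧸ P) := Ideal.Quotient.field P
  letI iA : Module (R ⧸ P) A := hA.module
  letI iB : Module (R ⧸ P) B := hB.module
  letI tA : IsScalarTower R (R ⧸ P) A := hA.isScalarTower
  letI tB : IsScalarTower R (R ⧸ P) B := hB.isScalarTower
  have hsurj : Function.Surjective (algebraMap R (R ⧸ P)) := Ideal.Quotient.mk_surjective
  let f' : A →ₗ[R ⧸ P] B := f.extendScalarsOfSurjective hsurj
  have hker : LinearMap.ker f' = ⊥ := by
    rw [LinearMap.ker_eq_bot]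
    intro x y hxy
    exact hf hxy
  obtain ⟨g', hg'⟩ := f'.exists_leftInverse_of_injective hker
  refine ⟨g'.restrictScalars R, ?_⟩
  ext a
  have := DFunLike.congr_fun hg' a
  exact this

end Aux

section Main

variable {R : Type*} [CommRing R] [IsLocalRing R]
variable {M : Type*} [AddCommGroup M] [Module R M]

set_option maxHeartbeats 1000000 in
lemma nqflat_all (hP2 : IsLocalRing.maximalIdeal R ^ 2 = ⊥) (q : ℕ)
    (hM : NQFlat R M 1 q) : ∀ n : ℕ, NQFlat R M n q := by
  intro n
  induction n with
  | zero =>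
    intro K _
    haveI : Subsingleton (Fin 0 → R) := ⟨fun a b => funext fun i => i.elim0⟩
    have hz : ∀ x : M ⊗[R] ↥K, x = 0 := by
      intro x
      induction x using TensorProduct.induction_on with
      | zero => rfl
      | tmul m k => rw [Subsingleton.elim k 0, tmul_zero]
      | add a b ha hb => rw [ha, hb, add_zero]
    intro a b _
    rw [hz a, hz b]
  | succ n ih =>
    intro K hKgen
    obtain ⟨s, hcard, hspan⟩ := hKgen
    classical
    set P := IsLocalRing.maximalIdeal R with hPdef
    have hPP : P * P = ⊥ := by rwa [← pow_two]
    rw [injective_iff_map_eq_zero]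
    intro ξ hξ
    by_cases hc : ∀ v ∈ s, ∀ i, v i ∈ P
    · -- all generators have coordinates in the maximal ideal
      have hK : K ≤ Submodule.pi Set.univ (fun _ : Fin (n+1) => P) := by
        rw [← hspan]
        apply Submodule.span_le.mpr
        intro v hv
        rw [SetLike.mem_coe, Submodule.mem_pi]
        intro i _
        exact hc v hv i
      have hmem : ∀ x ∈ K, ∀ i, x i ∈ P := by
        intro x hx i
        exact (Submodule.mem_pi.mp (hK hx)) i trivial
      -- each coordinate image
      let π : Fin (n+1) → ((Fin (n+1) → R) →ₗ[R] (Fin 1 → R)) :=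
        fun i => LinearMap.pi (fun _ => LinearMap.proj i)
      let Ki : Fin (n+1) → Submodule R (Fin 1 → R) := fun i => Submodule.map (π i) K
      have hKi : ∀ i, Function.Injective (LinearMap.lTensor M (Ki i).subtype) := by
        intro i
        apply hM
        refine ⟨s.image (π i), le_trans (Finset.card_image_le) hcard, ?_⟩
        rw [Finset.coe_image, ← Submodule.map_span, hspan]
      let c : ∀ i : Fin (n+1), (↥K →ₗ[R] ↥(Ki i)) := fun i =>
        LinearMap.codRestrict (Ki i) ((π i) ∘ₗ K.subtype)
          (fun x => Submodule.mem_map_of_mem x.2)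
      have hcomm : ∀ i, (Ki i).subtype ∘ₗ (c i) = (π i) ∘ₗ K.subtype := fun i =>
        LinearMap.subtype_comp_codRestrict _ _ _
      have hξi : ∀ i, LinearMap.lTensor M (c i) ξ = 0 := by
        intro i
        have hinj := hKi i
        rw [injective_iff_map_eq_zero] at hinj
        apply hinj
        have : LinearMap.lTensor M ((Ki i).subtype) (LinearMap.lTensor M (c i) ξ)
            = LinearMap.lTensor M (π i) (LinearMap.lTensor M K.subtype ξ) := by
          rw [← LinearMap.comp_apply, ← LinearMap.lTensor_comp, hcomm i,
            LinearMap.lTensor_comp, LinearMap.comp_apply]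
        rw [this, hξ, map_zero]
      -- the combined map into the product
      let cAll : ↥K →ₗ[R] (∀ i, ↥(Ki i)) := LinearMap.pi c
      have hcinj : Function.Injective cAll := by
        intro x y hxy
        apply Subtype.ext
        funext i
        have h1 : ((c i x : Fin 1 → R)) = ((c i y : Fin 1 → R)) :=
          congrArg Subtype.val (congrFun hxy i)
        exact congrFun h1 0
      -- torsion statements
      have torK : Module.IsTorsionBySet R ↥K (P : Set R) := by
        intro x r
        apply Subtype.ext
        show (r : R) • (x : Fin (n+1) → R) = 0
        funext i
        show (r : R) * (x : Fin (n+1) → R) i = 0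
        have h1 : (r : R) * (x : Fin (n+1) → R) i ∈ P * P :=
          Ideal.mul_mem_mul r.2 (hmem _ x.2 i)
        rw [hPP] at h1
        exact (Submodule.mem_bot R).mp h1
      have torP : Module.IsTorsionBySet R (∀ i, ↥(Ki i)) (P : Set R) := by
        intro x r
        funext i
        show (r : R) • (x i) = 0
        apply Subtype.ext
        show (r : R) • ((x i : Fin 1 → R)) = 0
        funext z
        show (r : R) * ((x i : Fin 1 → R)) z = 0
        obtain ⟨y, hy, hyx⟩ := (x i).2
        have hcoord : ((x i : Fin 1 → R)) z = y i := by rw [← hyx]; rfl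
        rw [hcoord]
        have h1 : (r : R) * y i ∈ P * P := Ideal.mul_mem_mul r.2 (hmem _ hy i)
        rw [hPP] at h1
        exact (Submodule.mem_bot R).mp h1
      obtain ⟨g, hg⟩ := exists_retraction_of_torsion torK torP cAll hcinj
      -- identity decomposition through the product
      have hid : (LinearMap.id : ↥K →ₗ[R] ↥K)
          = ∑ i, (g ∘ₗ LinearMap.single R (fun i => ↥(Ki i)) i) ∘ₗ c i := by
        rw [← hg]
        apply LinearMap.ext
        intro x
        rw [LinearMap.sum_apply]
        simp only [LinearMap.comp_apply]
        rw [← map_sum]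
        congr 1
        funext j
        rw [Finset.sum_apply]
        exact (Fintype.sum_pi_single j (fun i => (c i) x)).symm
      have hξ0 : ξ = LinearMap.lTensor M (LinearMap.id : ↥K →ₗ[R] ↥K) ξ := by
        rw [LinearMap.lTensor_id]; rfl
      rw [hξ0, hid]
      have hlsum : LinearMap.lTensor M
            (∑ i, (g ∘ₗ LinearMap.single R (fun i => ↥(Ki i)) i) ∘ₗ c i)
          = ∑ i, LinearMap.lTensor M ((g ∘ₗ LinearMap.single R (fun i => ↥(Ki i)) i) ∘ₗ c i) := by
        rw [← LinearMap.coe_lTensorHom]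
        exact map_sum (LinearMap.lTensorHom M) _ _
      rw [hlsum, LinearMap.sum_apply]
      apply Finset.sum_eq_zero
      intro i _
      rw [LinearMap.lTensor_comp, LinearMap.comp_apply, hξi i, map_zero]
    · -- some generator has a unit coordinate
      push_neg at hc
      obtain ⟨v, hvs, i₀, hvi⟩ := hc
      have hu : IsUnit (v i₀) := by rwa [← IsLocalRing.notMem_maximalIdeal]
      obtain ⟨u, hu⟩ := hu
      set cinv : R := ((u⁻¹ : Rˣ) : R) with hcinv
      have hcv : cinv * v i₀ = 1 := by rw [← hu]; exact u.inv_mul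
      have hvK : v ∈ K := hspan ▸ Submodule.subset_span hvs
      let τ : (Fin (n+1) → R) →ₗ[R] (Fin (n+1) → R) :=
        (LinearMap.proj i₀ : (Fin (n+1) → R) →ₗ[R] R).smulRight (cinv • v)
      let σ : (Fin (n+1) → R) →ₗ[R] (Fin (n+1) → R) := LinearMap.id - τ
      have hτ : ∀ x : Fin (n+1) → R, τ x = (x i₀ * cinv) • v := by
        intro x
        show x i₀ • (cinv • v) = _
        rw [smul_smul]
      have hσ : ∀ x : Fin (n+1) → R, σ x = x - (x i₀ * cinv) • v := by
        intro x
        show x - τ x = _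
        rw [hτ]
      let V : Submodule R (Fin (n+1) → R) := Submodule.span R {v}
      have hτmem : ∀ x : Fin (n+1) → R, τ x ∈ V := by
        intro x
        rw [hτ]
        exact Submodule.smul_mem _ _ (Submodule.mem_span_singleton_self v)
      have hτv : ∀ x ∈ V, τ x = x := by
        intro x hx
        obtain ⟨a, rfl⟩ := Submodule.mem_span_singleton.mp hx
        rw [hτ]
        show ((a • v) i₀ * cinv) • v = a • v
        have h1 : (a • v) i₀ = a * v i₀ := rfl
        rw [h1, mul_assoc, mul_comm (v i₀) cinv, hcv, mul_one]
      have hVinj : Function.Injective (LinearMap.lTensor M V.subtype) := by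
        apply lTensor_injective_of_retract V.subtype (LinearMap.codRestrict V τ hτmem)
        apply LinearMap.ext
        intro x
        apply Subtype.ext
        show τ (x : Fin (n+1) → R) = x
        exact hτv _ x.2
      have hσK : ∀ x ∈ K, σ x ∈ K := by
        intro x hx
        rw [hσ]
        exact Submodule.sub_mem K hx (Submodule.smul_mem K _ hvK)
      have hσi₀ : ∀ x : Fin (n+1) → R, σ x i₀ = 0 := by
        intro x
        rw [hσ]
        show x i₀ - ((x i₀ * cinv) • v) i₀ = 0
        have h1 : ((x i₀ * cinv) • v) i₀ = x i₀ * cinv * v i₀ := rfl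
        rw [h1, mul_assoc, hcv, mul_one, sub_self]
      let K₀ : Submodule R (Fin (n+1) → R) := Submodule.map σ K
      have hK₀K : K₀ ≤ K := by
        rintro _ ⟨x, hx, rfl⟩
        exact hσK x hx
      have hK₀i₀ : ∀ x ∈ K₀, x i₀ = 0 := by
        rintro _ ⟨x, hx, rfl⟩
        exact hσi₀ x
      let ρ : (Fin (n+1) → R) →ₗ[R] (Fin n → R) := LinearMap.funLeft R R i₀.succAbove
      let K₀' : Submodule R (Fin n → R) := Submodule.map ρ K₀
      have hIH : Function.Injective (LinearMap.lTensor M K₀'.subtype) := by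
        apply ih
        refine ⟨s.image (fun x => ρ (σ x)), le_trans (Finset.card_image_le) hcard, ?_⟩
        rw [Finset.coe_image]
        show Submodule.span R ((fun x => ρ (σ x)) '' ↑s) = Submodule.map ρ (Submodule.map σ K)
        rw [← Set.image_image, ← Submodule.map_span, ← Submodule.map_span, hspan]
      let φ : ↥K₀ →ₗ[R] ↥K₀' :=
        LinearMap.codRestrict K₀' (ρ ∘ₗ K₀.subtype) (fun x => Submodule.mem_map_of_mem x.2)
      have hφbij : Function.Bijective φ := by
        constructor
        · intro x y hxy
          apply Subtype.ext
          funext i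
          by_cases hi : i = i₀
          · rw [hi, hK₀i₀ _ x.2, hK₀i₀ _ y.2]
          · obtain ⟨j, rfl⟩ := Fin.exists_succAbove_eq hi
            have h1 : ((φ x : Fin n → R)) = ((φ y : Fin n → R)) :=
              congrArg Subtype.val hxy
            have h2 := congrFun h1 j
            have h3 : ((φ x : Fin n → R)) j = (x : Fin (n+1) → R) (i₀.succAbove j) := rfl
            have h4 : ((φ y : Fin n → R)) j = (y : Fin (n+1) → R) (i₀.succAbove j) := rfl
            rw [h3, h4] at h2
            exact h2
        · rintro ⟨_, y, hy, rfl⟩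
          exact ⟨⟨y, hy⟩, rfl⟩
      have hφcomm : K₀'.subtype ∘ₗ φ = ρ ∘ₗ K₀.subtype :=
        LinearMap.subtype_comp_codRestrict _ _ _
      have hK₀inj : Function.Injective (LinearMap.lTensor M K₀.subtype) := by
        have h1 : Function.Injective (LinearMap.lTensor M (ρ ∘ₗ K₀.subtype)) := by
          rw [← hφcomm, LinearMap.lTensor_comp, LinearMap.coe_comp]
          exact Function.Injective.comp hIH (lTensor_injective_of_bijective φ hφbij)
        have h2 : Function.Injective
            ((LinearMap.lTensor M ρ) ∘ (LinearMap.lTensor M K₀.subtype)) := by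
          rw [← LinearMap.coe_comp, ← LinearMap.lTensor_comp]
          exact h1
        exact Function.Injective.of_comp h2
      -- decomposition of the identity of K
      have hVK : V ≤ K := by
        apply Submodule.span_le.mpr
        intro x hx
        rw [Set.mem_singleton_iff] at hx
        rw [hx]
        exact hvK
      let τ' : ↥K →ₗ[R] ↥V :=
        LinearMap.codRestrict V (τ ∘ₗ K.subtype) (fun x => hτmem _)
      let σ' : ↥K →ₗ[R] ↥K₀ :=
        LinearMap.codRestrict K₀ (σ ∘ₗ K.subtype) (fun x => Submodule.mem_map_of_mem x.2)
      have hτ'comm : V.subtype ∘ₗ τ' = τ ∘ₗ K.subtype :=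
        LinearMap.subtype_comp_codRestrict _ _ _
      have hσ'comm : K₀.subtype ∘ₗ σ' = σ ∘ₗ K.subtype :=
        LinearMap.subtype_comp_codRestrict _ _ _
      have hdecomp : (LinearMap.id : ↥K →ₗ[R] ↥K)
          = (Submodule.inclusion hVK) ∘ₗ τ' + (Submodule.inclusion hK₀K) ∘ₗ σ' := by
        apply LinearMap.ext
        intro x
        apply Subtype.ext
        show (x : Fin (n+1) → R) = τ (x : Fin (n+1) → R) + σ (x : Fin (n+1) → R)
        show (x : Fin (n+1) → R)
          = τ (x : Fin (n+1) → R) + ((x : Fin (n+1) → R) - τ (x : Fin (n+1) → R))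
        rw [add_sub_cancel]
      have hη₁ : LinearMap.lTensor M τ' ξ = 0 := by
        rw [injective_iff_map_eq_zero] at hVinj
        apply hVinj
        have h1 : LinearMap.lTensor M V.subtype (LinearMap.lTensor M τ' ξ)
            = LinearMap.lTensor M τ (LinearMap.lTensor M K.subtype ξ) := by
          rw [← LinearMap.comp_apply, ← LinearMap.lTensor_comp, hτ'comm,
            LinearMap.lTensor_comp, LinearMap.comp_apply]
        rw [h1, hξ, map_zero]
      have hη₂ : LinearMap.lTensor M σ' ξ = 0 := by
        rw [injective_iff_map_eq_zero] at hK₀inj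
        apply hK₀inj
        have h1 : LinearMap.lTensor M K₀.subtype (LinearMap.lTensor M σ' ξ)
            = LinearMap.lTensor M σ (LinearMap.lTensor M K.subtype ξ) := by
          rw [← LinearMap.comp_apply, ← LinearMap.lTensor_comp, hσ'comm,
            LinearMap.lTensor_comp, LinearMap.comp_apply]
        rw [h1, hξ, map_zero]
      have hξ0 : ξ = LinearMap.lTensor M (LinearMap.id : ↥K →ₗ[R] ↥K) ξ := by
        rw [LinearMap.lTensor_id]; rfl
      rw [hξ0, hdecomp, LinearMap.lTensor_add, LinearMap.add_apply,
        LinearMap.lTensor_comp, LinearMap.lTensor_comp, LinearMap.comp_apply,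
        LinearMap.comp_apply, hη₁, hη₂, map_zero, map_zero, add_zero]

end Main

/-- over a commutative local ring whose maximal ideal `P` satisfies
`P² = 0`, every `(1,q)`-flat module is `(n,q)`-flat for all `n > 0`. -/
theorem stmt_12 (R : Type*) [CommRing R] [IsLocalRing R]
    (hP2 : IsLocalRing.maximalIdeal R ^ 2 = ⊥) (q : ℕ) (hq : 0 < q)
    (M : Type*) [AddCommGroup M] [Module R M]
    (hM : NQFlat R M 1 q) :
    ∀ n : ℕ, 0 < n → NQFlat R M n q := by
  intro n _
  exact nqflat_all hP2 q hM n
end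

section
/- Let R be a commutative local ring with maximal ideal P and residue field k such that P² = 0 and dim_k P > p for some positive integer p. Let a₁,…,a_{p+1} be k-linearly independent elements of P, let F = R^{p+1} with basis e₁,…,e_{p+1}, let K be the cyclic submodule generated by a₁e₁ + ⋯ + a_{p+1}e_{p+1}, and let M = F/K. Then M is not a flat R-module, but the natural map M ⊗_R A → M is injective for every ideal A of R generated by at most p elements. -/
open IsLocalRing
open scoped TensorProduct

set_option synthInstance.maxHeartbeats 1000000
set_option maxHeartbeats 1000000

section Aux

variable (R : Type*) [CommRing R] [IsLocalRing R]

theorem aux_mul (hP2 : maximalIdeal R ^ 2 = ⊥) {x y : R} (hx : x ∈ maximalIdeal R)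
    (hy : y ∈ maximalIdeal R) : x * y = 0 := by
  have : x * y ∈ maximalIdeal R ^ 2 := by rw [pow_two]; exact Ideal.mul_mem_mul hx hy
  rw [hP2] at this; exact this

variable (p : ℕ) (a : Fin (p + 1) → R)
    (hind : ∀ c : Fin (p + 1) → R, (∑ i, c i * a i) = 0 → ∀ i, c i ∈ maximalIdeal R)

include hind in
theorem aux_a_ne_zero : a ≠ 0 := by
  intro h
  have h1 : (∑ i, (Pi.single (0 : Fin (p+1)) (1:R) : Fin (p+1) → R) i * a i) = 0 := by
    simp [h]
  have := hind _ h1 0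
  rw [Pi.single_eq_same] at this
  exact this isUnit_one

variable (hP2 : maximalIdeal R ^ 2 = ⊥) (haP : ∀ i, a i ∈ maximalIdeal R)

include hP2 haP hind in
theorem aux_not_flat :
    ¬ Module.Flat R ((Fin (p + 1) → R) ⧸ (Submodule.span R {a})) := by
  intro hflat
  -- the pairing M ⊗ P → F, (m, x) ↦ x • (lift of m)
  let φ : (Fin (p + 1) → R) →ₗ[R] (maximalIdeal R →ₗ[R] (Fin (p + 1) → R)) :=
    ((LinearMap.lsmul R (Fin (p + 1) → R)).comp (maximalIdeal R).subtype).flip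
  have hφ : Submodule.span R {a} ≤ LinearMap.ker φ := by
    rw [Submodule.span_le, Set.singleton_subset_iff, SetLike.mem_coe, LinearMap.mem_ker]
    refine LinearMap.ext fun x => funext fun i => ?_
    show (x : R) * a i = 0
    exact aux_mul R hP2 x.2 (haP i)
  let Φ := Submodule.liftQ (Submodule.span R {a}) φ hφ
  let Ψ := TensorProduct.lift Φ
  let z : ((Fin (p + 1) → R) ⧸ (Submodule.span R {a})) ⊗[R] (maximalIdeal R) :=
    ∑ i, ((Submodule.span R {a}).mkQ (Pi.single i 1)) ⊗ₜ[R]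
      (⟨a i, haP i⟩ : maximalIdeal R)
  have hsum : (∑ i, a i • (Pi.single i 1 : Fin (p + 1) → R)) = a := by
    funext j
    simp [Pi.single_apply]
  have hΨz : Ψ z = a := by
    show (TensorProduct.lift Φ) _ = a
    rw [map_sum]
    simp only [TensorProduct.lift.tmul, Φ, Submodule.liftQ_apply, φ, LinearMap.flip_apply,
      LinearMap.comp_apply, Submodule.coe_subtype, LinearMap.lsmul_apply]
    exact hsum
  have hz0 : LinearMap.lTensor _ (maximalIdeal R).subtype z = 0 := by
    apply (TensorProduct.rid R _).injective
    simp only [z, map_sum, map_zero, LinearMap.lTensor_tmul, Submodule.coe_subtype,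
      TensorProduct.rid_tmul]
    have h3 : (∑ i, a i • (Submodule.span R {a}).mkQ (Pi.single i 1))
        = (Submodule.span R {a}).mkQ a := by
      calc ∑ i, a i • (Submodule.span R {a}).mkQ (Pi.single i 1)
          = ∑ i, (Submodule.span R {a}).mkQ (a i • (Pi.single i 1 : Fin (p + 1) → R)) :=
            Finset.sum_congr rfl fun i _ => (map_smul _ _ _).symm
        _ = (Submodule.span R {a}).mkQ (∑ i, a i • (Pi.single i 1 : Fin (p + 1) → R)) :=
            (map_sum _ _ _).symm
        _ = (Submodule.span R {a}).mkQ a := by rw [hsum]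
    rw [h3, Submodule.mkQ_apply, Submodule.Quotient.mk_eq_zero]
    exact Submodule.mem_span_singleton_self a
  have hinj := Module.Flat.lTensor_preserves_injective_linearMap
    (M := (Fin (p + 1) → R) ⧸ (Submodule.span R {a}))
    (maximalIdeal R).subtype (Submodule.injective_subtype _)
  have hz : z = 0 := hinj (by rw [hz0, map_zero])
  have h4 : Ψ z = 0 := by rw [hz, map_zero]
  rw [hΨz] at h4
  exact aux_a_ne_zero R p a hind h4

include hP2 haP hind in
theorem aux_inj (A : Ideal R) (hs : ∃ s : Finset R, s.card ≤ p ∧ Ideal.span (s : Set R) = A) :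
    Function.Injective
      ((TensorProduct.rid R ((Fin (p + 1) → R) ⧸ (Submodule.span R {a}))).toLinearMap ∘ₗ
        LinearMap.lTensor ((Fin (p + 1) → R) ⧸ (Submodule.span R {a}))
          (A.subtype)) := by
  obtain ⟨s, hcard, hspan⟩ := hs
  by_cases hA : A = ⊤
  · -- A = R : the map is an isomorphism
    have he : A.subtype = (LinearEquiv.ofTop A hA).toLinearMap := by
      ext x; rfl
    have hinj : Function.Injective
        (LinearMap.lTensor ((Fin (p + 1) → R) ⧸ (Submodule.span R {a})) A.subtype) := by
      rw [he, ← LinearEquiv.coe_lTensor]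
      exact (LinearEquiv.lTensor _ (LinearEquiv.ofTop A hA)).injective
    rw [LinearMap.coe_comp, LinearEquiv.coe_coe]
    exact (TensorProduct.rid R _).injective.comp hinj
  · have hAP : A ≤ maximalIdeal R := IsLocalRing.le_maximalIdeal hA
    -- the p+1 elements a i cannot all lie in A
    have hnotall : ¬ (∀ i, a i ∈ A) := by
      intro hall
      have hall' : ∀ i, ∃ f : R → R, ∑ b ∈ s, f b • b = a i := by
        intro i
        have : a i ∈ Submodule.span R (s : Set R) := by
          rw [Ideal.submodule_span_eq, hspan]; exact hall i
        obtain ⟨f, -, hf⟩ := Submodule.mem_span_finset.1 this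
        exact ⟨f, hf⟩
      choose r hr using hall'
      let v : Fin (p + 1) → ({x // x ∈ s} → ResidueField R) := fun i b => residue R (r i b.1)
      have hnli : ¬ LinearIndependent (ResidueField R) v := by
        intro hli
        have h1 := hli.fintype_card_le_finrank
        rw [Module.finrank_pi, Fintype.card_coe, Fintype.card_fin] at h1
        omega
      obtain ⟨g, hg, i0, hgi0⟩ := Fintype.not_linearIndependent_iff.1 hnli
      choose c hc using fun i => residue_surjective (R := R) (g i)
      have hkey : ∑ i, c i * a i = 0 := by
        calc ∑ i, c i * a i = ∑ i, ∑ b ∈ s, c i * r i b * b := by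
              refine Finset.sum_congr rfl fun i _ => ?_
              rw [← hr i, Finset.mul_sum]
              exact Finset.sum_congr rfl fun b _ => by rw [smul_eq_mul, mul_assoc]
          _ = ∑ b ∈ s, ∑ i, c i * r i b * b := Finset.sum_comm
          _ = ∑ b ∈ s, (∑ i, c i * r i b) * b :=
              Finset.sum_congr rfl fun b _ => (Finset.sum_mul _ _ _).symm
          _ = 0 := by
              refine Finset.sum_eq_zero fun b hb => ?_
              refine aux_mul R hP2 ?_ (hAP (hspan ▸ Ideal.subset_span hb))
              rw [← residue_eq_zero_iff, map_sum]
              have hgb := congrFun hg ⟨b, hb⟩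
              simp only [Finset.sum_apply, Pi.smul_apply, smul_eq_mul, Pi.zero_apply, v] at hgb
              calc ∑ i, residue R (c i * r i b) = ∑ i, g i * residue R (r i b) :=
                    Finset.sum_congr rfl fun i _ => by rw [map_mul, hc]
                _ = 0 := hgb
      have := hind c hkey i0
      rw [← residue_eq_zero_iff, hc] at this
      exact hgi0 this
    -- main injectivity argument
    rw [← LinearMap.ker_eq_bot, Submodule.eq_bot_iff]
    intro z hz
    rw [LinearMap.mem_ker] at hz
    obtain ⟨w, rfl⟩ := LinearMap.rTensor_surjective (↥A)
      (g := (Submodule.span R {a} : Submodule R (Fin (p + 1) → R)).mkQ)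
      (Submodule.mkQ_surjective _) z
    have hnat : ∀ w : (Fin (p + 1) → R) ⊗[R] ↥A,
        (Submodule.span R {a}).mkQ
            ((TensorProduct.rid R (Fin (p + 1) → R))
              (LinearMap.lTensor (Fin (p + 1) → R) A.subtype w)) =
          (TensorProduct.rid R ((Fin (p + 1) → R) ⧸ (Submodule.span R {a})))
            (LinearMap.lTensor ((Fin (p + 1) → R) ⧸ (Submodule.span R {a})) A.subtype
              (LinearMap.rTensor (↥A) (Submodule.span R {a}).mkQ w)) := by
      intro w
      induction w using TensorProduct.induction_on with
      | zero => simp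
      | tmul x b => simp [TensorProduct.rid_tmul]
      | add x y hx hy => simp only [map_add, hx, hy]
    have hfA : ∀ w : (Fin (p + 1) → R) ⊗[R] ↥A, ∀ i,
        ((TensorProduct.rid R (Fin (p + 1) → R))
          (LinearMap.lTensor (Fin (p + 1) → R) A.subtype w)) i ∈ A := by
      intro w
      induction w using TensorProduct.induction_on with
      | zero => intro i; simp
      | tmul x b =>
        intro i
        simp only [LinearMap.lTensor_tmul, Submodule.coe_subtype, TensorProduct.rid_tmul,
          Pi.smul_apply, smul_eq_mul]
        exact Ideal.mul_mem_right _ _ b.2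
      | add x y hx hy =>
        intro i
        rw [map_add, map_add, Pi.add_apply]
        exact A.add_mem (hx i) (hy i)
    set f := (TensorProduct.rid R (Fin (p + 1) → R))
      (LinearMap.lTensor (Fin (p + 1) → R) A.subtype w) with hfdef
    have hf0 : (Submodule.span R {a}).mkQ f = 0 := by
      rw [hfdef, hnat w]
      exact hz
    have hfmem : f ∈ Submodule.span R ({a} : Set (Fin (p + 1) → R)) := by
      rwa [Submodule.mkQ_apply, Submodule.Quotient.mk_eq_zero] at hf0
    obtain ⟨c, hcf⟩ := Submodule.mem_span_singleton.1 hfmem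
    by_cases hc : IsUnit c
    · exfalso
      apply hnotall
      intro i
      have key : (hc.unit⁻¹ : Rˣ) • f i = a i := by
        rw [← hcf]
        show (hc.unit⁻¹ : Rˣ) • (c * a i) = a i
        rw [Units.smul_def, smul_eq_mul, ← mul_assoc, IsUnit.val_inv_mul, one_mul]
      rw [← key, Units.smul_def, smul_eq_mul]
      exact Ideal.mul_mem_left _ _ (hfA w i)
    · have hcP : c ∈ maximalIdeal R := (mem_maximalIdeal c).2 (mem_nonunits_iff.2 hc)
      have hf0' : f = 0 := by
        rw [← hcf]
        funext i
        show c * a i = 0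
        exact aux_mul R hP2 hcP (haP i)
      have hw1 : LinearMap.lTensor (Fin (p + 1) → R) A.subtype w = 0 := by
        apply (TensorProduct.rid R (Fin (p + 1) → R)).injective
        rw [map_zero, ← hfdef, hf0']
      have hw0 : w = 0 :=
        Module.Flat.lTensor_preserves_injective_linearMap A.subtype
          (Submodule.injective_subtype A) (by rw [hw1, map_zero])
      rw [hw0, map_zero]

end Aux

/-- let `(R,P)` be commutative local with `P² = 0`, and let
`a₁, …, a_{p+1} ∈ P` be linearly independent over the residue field `k = R/P`
(equivalently: any relation `∑ cᵢ aᵢ = 0` forces all `cᵢ ∈ P`).  Let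
`M = R^{p+1} / R·(a₁,…,a_{p+1})`.  Then `M` is not flat, but the natural map
`M ⊗_R A → M` is injective for every ideal `A` generated by at most `p` elements. -/
theorem stmt_13 (R : Type*) [CommRing R] [IsLocalRing R]
    (hP2 : maximalIdeal R ^ 2 = ⊥) (p : ℕ) (hp : 0 < p)
    (a : Fin (p + 1) → R) (haP : ∀ i, a i ∈ maximalIdeal R)
    (hind : ∀ c : Fin (p + 1) → R, (∑ i, c i * a i) = 0 → ∀ i, c i ∈ maximalIdeal R) :
    ¬ Module.Flat R ((Fin (p + 1) → R) ⧸ (Submodule.span R {a})) ∧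
      ∀ A : Ideal R,
        (∃ s : Finset R, s.card ≤ p ∧ Ideal.span (s : Set R) = A) →
        Function.Injective
          ((TensorProduct.rid R ((Fin (p + 1) → R) ⧸ (Submodule.span R {a}))).toLinearMap ∘ₗ
            LinearMap.lTensor ((Fin (p + 1) → R) ⧸ (Submodule.span R {a}))
              (A.subtype)) := by
  exact ⟨aux_not_flat R p a hind hP2 haP,
    fun A hA => aux_inj R p a hind hP2 haP A hA⟩
end

section
/- Let R be a commutative ring and let 0 → A → B → C → 0 be a short exact sequence of R-modules. If for every maximal ideal P of R and every R_P-module G that is a quotient of R_P^n by an m-generated submodule, the localized sequence remains exact after tensoring with G over R_P, then for every R-module M that is a quotient of R^n by an m-generated submodule, the sequence 0 → M ⊗ A → M ⊗ B → M ⊗ C → 0 is exact. -/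
open TensorProduct

section AuxUnit

variable {R : Type*} [CommSemiring R] (S : Submonoid R)
variable (Rₚ : Type*) [CommSemiring Rₚ] [Algebra R Rₚ] [IsLocalization S Rₚ]

lemma aux_isUnit_end (Z : Type*) [AddCommMonoid Z] [Module R Z] [Module Rₚ Z]
    [IsScalarTower R Rₚ Z] (s : S) : IsUnit (algebraMap R (Module.End R Z) s) := by
  refine isUnit_iff_exists.mpr ⟨(IsLocalization.mk' Rₚ (1 : R) s) • (LinearMap.id : Z →ₗ[R] Z),
    ?_, ?_⟩
  · ext z
    simp only [Module.End.mul_apply, Module.algebraMap_end_apply, LinearMap.smul_apply,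
      LinearMap.id_coe, id_eq, Module.End.one_apply]
    rw [← smul_assoc, Algebra.smul_def, IsLocalization.mk'_spec', map_one, one_smul]
  · ext z
    simp only [Module.End.mul_apply, Module.algebraMap_end_apply, LinearMap.smul_apply,
      LinearMap.id_coe, id_eq, Module.End.one_apply]
    rw [smul_comm, ← smul_assoc, Algebra.smul_def, IsLocalization.mk'_spec', map_one, one_smul]

end AuxUnit

section AuxRTensor

variable {R : Type*} [CommRing R] (S : Submonoid R)

lemma aux_isLocalizedModule_rTensor (Rₚ : Type*) [CommRing Rₚ] [Algebra R Rₚ]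
    [IsLocalization S Rₚ] {X X' : Type*} (Y : Type*)
    [AddCommGroup X] [AddCommGroup X'] [AddCommGroup Y]
    [Module R X] [Module R X'] [Module R Y] [Module Rₚ X'] [IsScalarTower R Rₚ X']
    (fX : X →ₗ[R] X') [IsLocalizedModule S fX] :
    IsLocalizedModule S (LinearMap.rTensor Y fX) := by
  rw [isLocalizedModule_iff_isBaseChange S Rₚ]
  apply IsBaseChange.of_lift_unique
  intro Q _ _ _ _ g
  let l0 : X' →ₗ[R] (Y →ₗ[R] Q) :=
    IsLocalizedModule.lift S fX (TensorProduct.curry g)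
      (fun s => aux_isUnit_end S Rₚ _ s)
  have hl0 : l0 ∘ₗ fX = TensorProduct.curry g :=
    IsLocalizedModule.lift_comp S fX (TensorProduct.curry g)
      (fun s => aux_isUnit_end S Rₚ _ s)
  refine ⟨LinearMap.extendScalarsOfIsLocalization S Rₚ (TensorProduct.uncurry (RingHom.id R) X' Y Q l0),
    ?_, ?_⟩
  · apply TensorProduct.ext'
    intro x y
    have := LinearMap.congr_fun hl0 x
    simp only [LinearMap.coe_comp, Function.comp_apply] at this
    simp [this]
  · intro g'' h''
    apply LinearMap.restrictScalars_injective R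
    have hkey : TensorProduct.curry (g''.restrictScalars R) = l0 := by
      refine (IsLocalizedModule.ext S fX
        (fun s => aux_isUnit_end S Rₚ _ s) ?_).symm
      rw [hl0]
      ext x y
      have := LinearMap.congr_fun h'' (x ⊗ₜ[R] y)
      simpa using this.symm
    apply TensorProduct.ext'
    intro x y
    have := LinearMap.congr_fun (LinearMap.congr_fun hkey x) y
    simpa using this

end AuxRTensor

section AuxMain

open LinearMap

set_option maxHeartbeats 1000000 in
lemma aux_injective_localized
    {R : Type*} [CommRing R] {A B : Type*} [AddCommGroup A] [AddCommGroup B]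
    [Module R A] [Module R B] (f : A →ₗ[R] B) {n m : ℕ} (K : Submodule R (Fin n → R))
    (s : Finset (Fin n → R)) (hsc : s.card ≤ m)
    (hsp : Submodule.span R (s : Set (Fin n → R)) = K)
    (P : Ideal R) [P.IsMaximal]
    (hP : ∀ K' : Submodule (Localization P.primeCompl) (Fin n → Localization P.primeCompl),
        (∃ s' : Finset (Fin n → Localization P.primeCompl), s'.card ≤ m ∧
            Submodule.span (Localization P.primeCompl)
              (s' : Set (Fin n → Localization P.primeCompl)) = K') →
        Function.Injective
            (LinearMap.lTensor ((Fin n → Localization P.primeCompl) ⧸ K')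
              (LocalizedModule.map P.primeCompl f))) :
    Function.Injective
      (LocalizedModule.map P.primeCompl (LinearMap.lTensor ((Fin n → R) ⧸ K) f)) := by
  classical
  set S := P.primeCompl with hS
  -- the localized free module
  let e : LocalizedModule S (Fin n → R) ≃ₗ[Localization S] (Fin n → Localization S) :=
    (IsLocalizedModule.isBaseChange S (Localization S)
        (LocalizedModule.mkLinearMap S (Fin n → R))).equiv.symm ≪≫ₗ
      TensorProduct.piScalarRight R (Localization S) (Localization S) (Fin n)
  let fpi : (Fin n → R) →ₗ[R] (Fin n → Localization S) :=
    (e.restrictScalars R : LocalizedModule S (Fin n → R) ≃ₗ[R] (Fin n → Localization S)) ∘ₗ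
      LocalizedModule.mkLinearMap S (Fin n → R)
  haveI hfpi : IsLocalizedModule S fpi :=
    IsLocalizedModule.of_linearEquiv S (LocalizedModule.mkLinearMap S (Fin n → R)) _
  -- the localized submodule and quotient
  set K' : Submodule (Localization S) (Fin n → Localization S) :=
    K.localized' (Localization S) S fpi with hK'def
  have hK' : ∃ s' : Finset (Fin n → Localization S), s'.card ≤ m ∧
      Submodule.span (Localization S) (s' : Set (Fin n → Localization S)) = K' := by
    refine ⟨s.image fpi, (Finset.card_image_le).trans hsc, ?_⟩
    rw [Finset.coe_image, ← Submodule.localized'_span (Localization S) S fpi, hsp]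
  set M := (Fin n → R) ⧸ K
  set M' := (Fin n → Localization S) ⧸ K' with hM'
  let fq : M →ₗ[R] M' := K.toLocalizedQuotient' (Localization S) S fpi
  haveI hfq : IsLocalizedModule S fq :=
    IsLocalizedModule.toLocalizedQuotient' (Localization S) S fpi K
  -- the maps identifying localizations of tensor products
  haveI hrA : IsLocalizedModule S (rTensor A fq) :=
    aux_isLocalizedModule_rTensor S (Localization S) A fq
  haveI hrB : IsLocalizedModule S (rTensor B fq) :=
    aux_isLocalizedModule_rTensor S (Localization S) B fq
  let iso2A : M' ⊗[R] A ≃ₗ[Localization S] M' ⊗[Localization S] LocalizedModule S A :=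
    (TensorProduct.AlgebraTensorModule.cancelBaseChange R (Localization S) (Localization S)
        M' A).symm ≪≫ₗ
      TensorProduct.congr (LinearEquiv.refl (Localization S) M')
        (IsLocalizedModule.isBaseChange S (Localization S)
          (LocalizedModule.mkLinearMap S A)).equiv
  let iso2B : M' ⊗[R] B ≃ₗ[Localization S] M' ⊗[Localization S] LocalizedModule S B :=
    (TensorProduct.AlgebraTensorModule.cancelBaseChange R (Localization S) (Localization S)
        M' B).symm ≪≫ₗ
      TensorProduct.congr (LinearEquiv.refl (Localization S) M')
        (IsLocalizedModule.isBaseChange S (Localization S)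
          (LocalizedModule.mkLinearMap S B)).equiv
  let φA : M ⊗[R] A →ₗ[R] M' ⊗[Localization S] LocalizedModule S A :=
    (iso2A.restrictScalars R :
        M' ⊗[R] A ≃ₗ[R] M' ⊗[Localization S] LocalizedModule S A) ∘ₗ rTensor A fq
  let φB : M ⊗[R] B →ₗ[R] M' ⊗[Localization S] LocalizedModule S B :=
    (iso2B.restrictScalars R :
        M' ⊗[R] B ≃ₗ[R] M' ⊗[Localization S] LocalizedModule S B) ∘ₗ rTensor B fq
  haveI hφA : IsLocalizedModule S φA :=
    IsLocalizedModule.of_linearEquiv S (rTensor A fq) _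
  haveI hφB : IsLocalizedModule S φB :=
    IsLocalizedModule.of_linearEquiv S (rTensor B fq) _
  have hφAt : ∀ (x : M) (a : A),
      φA (x ⊗ₜ a) = fq x ⊗ₜ (LocalizedModule.mkLinearMap S A a) := by
    intro x a
    simp only [φA, iso2A, LinearMap.coe_comp, LinearEquiv.coe_coe, Function.comp_apply,
      rTensor_tmul, LinearEquiv.restrictScalars_apply, LinearEquiv.trans_apply,
      TensorProduct.AlgebraTensorModule.cancelBaseChange_symm_tmul, TensorProduct.congr_tmul,
      LinearEquiv.refl_apply, IsBaseChange.equiv_tmul, one_smul]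
  have hφBt : ∀ (x : M) (b : B),
      φB (x ⊗ₜ b) = fq x ⊗ₜ (LocalizedModule.mkLinearMap S B b) := by
    intro x b
    simp only [φB, iso2B, LinearMap.coe_comp, LinearEquiv.coe_coe, Function.comp_apply,
      rTensor_tmul, LinearEquiv.restrictScalars_apply, LinearEquiv.trans_apply,
      TensorProduct.AlgebraTensorModule.cancelBaseChange_symm_tmul, TensorProduct.congr_tmul,
      LinearEquiv.refl_apply, IsBaseChange.equiv_tmul, one_smul]
  -- the localized tensored map
  set h' : M' ⊗[Localization S] LocalizedModule S A →ₗ[Localization S]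
      M' ⊗[Localization S] LocalizedModule S B := lTensor M' (LocalizedModule.map S f) with hh'
  have hsq : (h'.restrictScalars R) ∘ₗ φA = φB ∘ₗ lTensor M f := by
    apply TensorProduct.ext'
    intro x a
    simp only [LinearMap.coe_comp, Function.comp_apply, lTensor_tmul,
      LinearMap.restrictScalars_apply, hφAt, hφBt, hh', LocalizedModule.mkLinearMap_apply]
    rw [LocalizedModule.map_mk]
  -- transfer along the canonical equivalences
  let ψA : LocalizedModule S (M ⊗[R] A) ≃ₗ[R] M' ⊗[Localization S] LocalizedModule S A :=
    IsLocalizedModule.linearEquiv S (LocalizedModule.mkLinearMap S (M ⊗[R] A)) φA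
  let ψB : LocalizedModule S (M ⊗[R] B) ≃ₗ[R] M' ⊗[Localization S] LocalizedModule S B :=
    IsLocalizedModule.linearEquiv S (LocalizedModule.mkLinearMap S (M ⊗[R] B)) φB
  have hψA : ∀ z : M ⊗[R] A, ψA (LocalizedModule.mk z 1) = φA z := by
    intro z
    have h3 := LinearMap.congr_fun (IsLocalizedModule.iso_symm_comp S φA) z
    simp only [LinearMap.coe_comp, LinearEquiv.coe_coe, Function.comp_apply,
      LocalizedModule.mkLinearMap_apply] at h3
    show (IsLocalizedModule.iso S φA)
      ((IsLocalizedModule.iso S (LocalizedModule.mkLinearMap S (M ⊗[R] A))).symm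
        (LocalizedModule.mk z 1)) = φA z
    rw [IsLocalizedModule.iso_localizedModule_eq_refl, LinearEquiv.refl_symm,
      LinearEquiv.refl_apply, ← h3, LinearEquiv.apply_symm_apply]
  have hψB : ∀ z : M ⊗[R] B, ψB (LocalizedModule.mk z 1) = φB z := by
    intro z
    have h3 := LinearMap.congr_fun (IsLocalizedModule.iso_symm_comp S φB) z
    simp only [LinearMap.coe_comp, LinearEquiv.coe_coe, Function.comp_apply,
      LocalizedModule.mkLinearMap_apply] at h3
    show (IsLocalizedModule.iso S φB)
      ((IsLocalizedModule.iso S (LocalizedModule.mkLinearMap S (M ⊗[R] B))).symm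
        (LocalizedModule.mk z 1)) = φB z
    rw [IsLocalizedModule.iso_localizedModule_eq_refl, LinearEquiv.refl_symm,
      LinearEquiv.refl_apply, ← h3, LinearEquiv.apply_symm_apply]
  -- the commuting square with LocalizedModule.map
  have hcomm : (ψB : LocalizedModule S (M ⊗[R] B) →ₗ[R] _) ∘ₗ
      ((LocalizedModule.map S (lTensor M f)).restrictScalars R) =
      (h'.restrictScalars R) ∘ₗ (ψA : LocalizedModule S (M ⊗[R] A) →ₗ[R] _) := by
    apply IsLocalizedModule.ext S (LocalizedModule.mkLinearMap S (M ⊗[R] A))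
      (fun t => aux_isUnit_end S (Localization S) _ t)
    refine LinearMap.ext fun z => ?_
    show ψB ((LocalizedModule.map S (lTensor M f)) (LocalizedModule.mk z 1)) =
      h' (ψA (LocalizedModule.mk z 1))
    rw [LocalizedModule.map_mk, hψB, hψA]
    exact (LinearMap.congr_fun hsq z).symm
  -- conclude
  have hinj := hP K' hK'
  intro u v huv
  have h4 : h' (ψA u) = h' (ψA v) := by
    have h5 := LinearMap.congr_fun hcomm u
    have h6 := LinearMap.congr_fun hcomm v
    simp only [LinearMap.coe_comp, LinearEquiv.coe_coe, Function.comp_apply,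
      LinearMap.restrictScalars_apply] at h5 h6
    rw [← h5, ← h6, huv]
  exact ψA.injective (hinj h4)

end AuxMain


/-- let `0 → A → B → C → 0` be a short exact sequence of modules
over a commutative ring `R`.  If for every maximal ideal `P` and every
`(n,m)`-presented `R_P`-module `G` (a quotient of `R_P^n` by an `m`-generated
submodule) the localized sequence stays exact after tensoring with `G` over `R_P`,
then for every `(n,m)`-presented `R`-module `M` (a quotient of `R^n` by an
`m`-generated submodule) the sequence `0 → M ⊗ A → M ⊗ B → M ⊗ C → 0` is exact. -/
theorem stmt_14 (R : Type*) [CommRing R] (n m : ℕ) (hn : 0 < n) (hm : 0 < m)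
    (A B C : Type*) [AddCommGroup A] [AddCommGroup B] [AddCommGroup C]
    [Module R A] [Module R B] [Module R C]
    (f : A →ₗ[R] B) (g : B →ₗ[R] C)
    (hf : Function.Injective f) (hfg : Function.Exact f g) (hg : Function.Surjective g)
    (hloc : ∀ (P : Ideal R) [P.IsMaximal],
      ∀ K : Submodule (Localization P.primeCompl) (Fin n → Localization P.primeCompl),
        (∃ s : Finset (Fin n → Localization P.primeCompl), s.card ≤ m ∧
            Submodule.span (Localization P.primeCompl)
              (s : Set (Fin n → Localization P.primeCompl)) = K) →
        Function.Injective
            (LinearMap.lTensor ((Fin n → Localization P.primeCompl) ⧸ K)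
              (LocalizedModule.map P.primeCompl f)) ∧
          Function.Exact
            (LinearMap.lTensor ((Fin n → Localization P.primeCompl) ⧸ K)
              (LocalizedModule.map P.primeCompl f))
            (LinearMap.lTensor ((Fin n → Localization P.primeCompl) ⧸ K)
              (LocalizedModule.map P.primeCompl g)) ∧
          Function.Surjective
            (LinearMap.lTensor ((Fin n → Localization P.primeCompl) ⧸ K)
              (LocalizedModule.map P.primeCompl g))) :
    ∀ K : Submodule R (Fin n → R),
      (∃ s : Finset (Fin n → R), s.card ≤ m ∧
          Submodule.span R (s : Set (Fin n → R)) = K) →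
      Function.Injective (LinearMap.lTensor ((Fin n → R) ⧸ K) f) ∧
        Function.Exact (LinearMap.lTensor ((Fin n → R) ⧸ K) f)
          (LinearMap.lTensor ((Fin n → R) ⧸ K) g) ∧
        Function.Surjective (LinearMap.lTensor ((Fin n → R) ⧸ K) g) := by
  intro K hK
  obtain ⟨s, hsc, hsp⟩ := hK
  refine ⟨?_, lTensor_exact _ hfg hg, LinearMap.lTensor_surjective _ hg⟩
  apply injective_of_localized_maximal
  intro P hPmax
  exact aux_injective_localized f K s hsc hsp P (fun K' hK' => (hloc P K' hK').1)
end

section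
/- Let R be a commutative ring and M an R-module. Then M is (n,m)-flat over R if and only if M_P is (n,m)-flat over R_P for every maximal ideal P of R. -/
open TensorProduct LinearMap

section TensorLoc

variable {R : Type*} [CommRing R] (p : Submonoid R)
variable {M N N' : Type*} [AddCommGroup M] [Module R M] [AddCommGroup N] [Module R N]
  [AddCommGroup N'] [Module R N']
variable {M₁ N₁ N₁' : Type*}
  [AddCommGroup M₁] [Module R M₁] [Module (Localization p) M₁]
  [IsScalarTower R (Localization p) M₁]
  [AddCommGroup N₁] [Module R N₁] [Module (Localization p) N₁]
  [IsScalarTower R (Localization p) N₁]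
  [AddCommGroup N₁'] [Module R N₁'] [Module (Localization p) N₁']
  [IsScalarTower R (Localization p) N₁']
variable (f : M →ₗ[R] M₁) [IsLocalizedModule p f]
variable (g : N →ₗ[R] N₁) [IsLocalizedModule p g]
variable (g' : N' →ₗ[R] N₁') [IsLocalizedModule p g']

noncomputable def tensorLocEquiv :
    Localization p ⊗[R] (M ⊗[R] N) ≃ₗ[Localization p] M₁ ⊗[Localization p] N₁ :=
  (TensorProduct.AlgebraTensorModule.assoc R R (Localization p) (Localization p) M N).symm ≪≫ₗ
    (TensorProduct.AlgebraTensorModule.cancelBaseChange R (Localization p) (Localization p)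
      (Localization p ⊗[R] M) N).symm ≪≫ₗ
    TensorProduct.congr ((IsLocalizedModule.isBaseChange p (Localization p) f).equiv)
      ((IsLocalizedModule.isBaseChange p (Localization p) g).equiv)

noncomputable def tensorLoc : M ⊗[R] N →ₗ[R] M₁ ⊗[Localization p] N₁ :=
  ((tensorLocEquiv p f g).restrictScalars R).toLinearMap ∘ₗ
    TensorProduct.mk R (Localization p) (M ⊗[R] N) 1

instance : IsLocalizedModule p (TensorProduct.mk R (Localization p) (M ⊗[R] N) 1) :=
  (isLocalizedModule_iff_isBaseChange p (Localization p) _).mpr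
    (TensorProduct.isBaseChange _ _ _)

instance : IsLocalizedModule p (tensorLoc p f g) :=
  IsLocalizedModule.of_linearEquiv p (TensorProduct.mk R (Localization p) (M ⊗[R] N) 1)
    ((tensorLocEquiv p f g).restrictScalars R)

lemma tensorLoc_tmul (x : M) (y : N) : tensorLoc p f g (x ⊗ₜ y) = f x ⊗ₜ g y := by
  simp [tensorLoc, tensorLocEquiv, IsBaseChange.equiv_tmul]

lemma map_tensorLoc_eq (φ : N →ₗ[R] N') (Φ : N₁ →ₗ[Localization p] N₁')
    (hΦ : ∀ y : N, Φ (g y) = g' (φ y)) :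
    IsLocalizedModule.map p (tensorLoc p f g) (tensorLoc p f g') (lTensor M φ)
      = (lTensor M₁ Φ).restrictScalars R := by
  apply IsLocalizedModule.ext p (tensorLoc p f g)
    (IsLocalizedModule.map_units (tensorLoc p f g'))
  rw [IsLocalizedModule.map_comp]
  apply TensorProduct.ext'
  intro x y
  simp [tensorLoc_tmul, hΦ]

lemma injective_lTensor_iff_map (φ : N →ₗ[R] N') (Φ : N₁ →ₗ[Localization p] N₁')
    (hΦ : ∀ y : N, Φ (g y) = g' (φ y)) :
    Function.Injective (lTensor M₁ Φ) ↔
      Function.Injective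
        (IsLocalizedModule.map p (tensorLoc p f g) (tensorLoc p f g') (lTensor M φ)) := by
  rw [map_tensorLoc_eq p f g g' φ Φ hΦ]
  exact Iff.rfl

end TensorLoc

section PiLoc

variable {R : Type*} [CommRing R] (p : Submonoid R) (n : ℕ)

noncomputable def piLoc : (Fin n → R) →ₗ[R] (Fin n → Localization p) :=
  (Finsupp.linearEquivFunOnFinite R (Localization p) (Fin n)).toLinearMap ∘ₗ
    (Finsupp.mapRange.linearMap (Algebra.linearMap R (Localization p)) ∘ₗ
      (Finsupp.linearEquivFunOnFinite R R (Fin n)).symm.toLinearMap)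

instance : IsLocalizedModule p (piLoc p n) :=
  IsLocalizedModule.of_linearEquiv p _ _

end PiLoc

section Main

variable {R : Type*} [CommRing R] (p : Submonoid R) {n : ℕ}
variable {M : Type*} [AddCommGroup M] [Module R M]

lemma loc_subtype_comm (K : Submodule R (Fin n → R)) (y : K) :
    (K.localized' (Localization p) p (piLoc p n)).subtype
        (K.toLocalized' (Localization p) p (piLoc p n) y)
      = piLoc p n (K.subtype y) := rfl

lemma injective_loc_subtype_iff (K : Submodule R (Fin n → R)) :
    Function.Injective (lTensor (LocalizedModule p M)
        (K.localized' (Localization p) p (piLoc p n)).subtype) ↔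
      Function.Injective
        (IsLocalizedModule.map p
          (tensorLoc p (LocalizedModule.mkLinearMap p M)
            (K.toLocalized' (Localization p) p (piLoc p n)))
          (tensorLoc p (LocalizedModule.mkLinearMap p M) (piLoc p n))
          (lTensor M K.subtype)) :=
  injective_lTensor_iff_map p (LocalizedModule.mkLinearMap p M) _ _ _ _
    (loc_subtype_comm p K)

end Main

/-- An `R`-module `M` is `(n,m)`-flat if for every submodule `K` of the free
module `Rⁿ` generated by at most `m` elements, the natural map
`M ⊗[R] K → M ⊗[R] Rⁿ` is injective. -/
def NMFlat (R : Type*) [CommRing R] (M : Type*) [AddCommGroup M] [Module R M]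
    (n m : ℕ) : Prop :=
  ∀ K : Submodule R (Fin n → R),
    (∃ s : Finset (Fin n → R), s.card ≤ m ∧ Submodule.span R (s : Set (Fin n → R)) = K) →
    Function.Injective (LinearMap.lTensor M K.subtype)

/-- over a commutative ring `R`, a module `M` is `(n,m)`-flat iff
its localization `M_P` is `(n,m)`-flat over `R_P` for every maximal ideal `P`. -/
theorem stmt_15 (R : Type*) [CommRing R] (M : Type*) [AddCommGroup M] [Module R M]
    (n m : ℕ) (hn : 0 < n) (hm : 0 < m) :
    NMFlat R M n m ↔
      ∀ (P : Ideal R) [P.IsMaximal],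
        NMFlat (Localization P.primeCompl) (LocalizedModule P.primeCompl M) n m := by
  constructor
  · intro h P _ L hL
    obtain ⟨s, hs, hspan⟩ := hL
    classical
    choose xt hxt using fun w : Fin n → Localization P.primeCompl =>
      IsLocalizedModule.mk'_surjective P.primeCompl (piLoc P.primeCompl n) w
    set K := Submodule.span R ((s.image fun w => (xt w).1 : Finset (Fin n → R)) :
      Set (Fin n → R)) with hKdef
    have hK : K.localized' (Localization P.primeCompl) P.primeCompl
        (piLoc P.primeCompl n) = L := by
      rw [← hspan]
      apply le_antisymm
      · rw [hKdef, Submodule.localized'_span, Submodule.span_le]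
        rintro _ ⟨x', hx', rfl⟩
        rw [Finset.coe_image] at hx'
        obtain ⟨w, hw, rfl⟩ := hx'
        have hxt' : IsLocalizedModule.mk' (piLoc P.primeCompl n) (xt w).1 (xt w).2 = w :=
          hxt w
        have h1 := IsLocalizedModule.mk'_cancel' (piLoc P.primeCompl n) (xt w).1 (xt w).2
        rw [hxt'] at h1
        rw [SetLike.mem_coe, ← h1, Submonoid.smul_def,
          ← algebraMap_smul (Localization P.primeCompl) (((xt w).2 : R)) w]
        exact Submodule.smul_mem _ _ (Submodule.subset_span hw)
      · rw [Submodule.span_le]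
        intro w hw
        rw [SetLike.mem_coe, Submodule.mem_localized']
        exact ⟨(xt w).1, Submodule.subset_span (Finset.mem_coe.mpr
          (Finset.mem_image_of_mem _ hw)), (xt w).2, hxt w⟩
    have hinj : Function.Injective (lTensor M K.subtype) :=
      h K ⟨s.image fun w => (xt w).1, le_trans (Finset.card_image_le) hs, hKdef.symm⟩
    have := (injective_loc_subtype_iff (M := M) P.primeCompl K).mpr
      (IsLocalizedModule.map_injective P.primeCompl _ _ _ hinj)
    rwa [hK] at this
  · intro h K hK
    obtain ⟨s, hs, hspan⟩ := hK
    apply injective_of_isLocalized_maximal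
      (fun P _ => (LocalizedModule P.primeCompl M) ⊗[Localization P.primeCompl]
        (K.localized' (Localization P.primeCompl) P.primeCompl (piLoc P.primeCompl n)))
      (fun P _ => tensorLoc P.primeCompl (LocalizedModule.mkLinearMap P.primeCompl M)
        (K.toLocalized' (Localization P.primeCompl) P.primeCompl (piLoc P.primeCompl n)))
      (fun P _ => (LocalizedModule P.primeCompl M) ⊗[Localization P.primeCompl]
        (Fin n → Localization P.primeCompl))
      (fun P _ => tensorLoc P.primeCompl (LocalizedModule.mkLinearMap P.primeCompl M)
        (piLoc P.primeCompl n))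
      (lTensor M K.subtype)
    intro P _
    apply (injective_loc_subtype_iff P.primeCompl K).mp
    apply h P (K.localized' (Localization P.primeCompl) P.primeCompl (piLoc P.primeCompl n))
    classical
    refine ⟨s.image (piLoc P.primeCompl n), le_trans (Finset.card_image_le) hs, ?_⟩
    rw [← hspan, Submodule.localized'_span, Finset.coe_image]
end
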